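/- arXiv:1207.5784 — 5 statements merged into one kernel-verified Lean document; each statement's English description precedes it below -/
import Mathlib

section
/- If f is analytic on the closed unit disk (or analytic on D with continuous extension) and Hölder continuous of order α ∈ (0,1/2) on D ∪ T, with Hölder constant A, then sup_{a∈D} (1-|a|^2)^{-2α} ∫_T |f(σ_a(ξ)) − f(a)|^2 |dξ| ≤ C·A^2 for a constant C depending only on α. (This is the case p = 1+2α of: the Lipschitz class A_{(p-1)/2} embeds in the Campanato space CA_p with equivalent norms, for p ∈ (1,2).) -/
/-- The Möbius involution `σ_a(z) = (a - z)/(1 - conj(a) z)` of the unit disk. -/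
noncomputable def mSigma (a z : ℂ) : ℂ := (a - z) / (1 - (starRingEnd ℂ) a * z)

/-- The squared boundary `L²` norm `∫_T ‖f(ξ)‖² |dξ|` over the unit circle. -/
noncomputable def bnormSq (f : ℂ → ℂ) : ℝ :=
  ∫ θ in (0:ℝ)..(2 * Real.pi), ‖f (Complex.exp (θ * Complex.I))‖ ^ 2

open Real Complex MeasureTheory intervalIntegral


lemma aux_one_sub_ne {z : ℂ} (hz : ‖z‖ < 1) : (1 : ℂ) - z ≠ 0 := by
  intro h
  have : (1:ℂ) = z := by linear_combination h
  rw [← this] at hz; simp at hz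

lemma aux_norm_lb {r t : ℝ} (hr0 : 0 ≤ r) (ht0 : 0 ≤ t) (htπ : t ≤ π) :
    t / π ≤ ‖1 - (r : ℂ) * Complex.exp (t * Complex.I)‖ := by
  have hsin : t / π ≤ Real.sin (t / 2) := by
    simpa using Real.mul_le_sin (x := t / 2) (by positivity) (by linarith)
  have hsq : Real.sin (t/2) ^ 2 = (1 - Real.cos t) / 2 := by
    have h := Real.cos_sq (t/2)
    rw [show 2*(t/2) = t by ring] at h
    have h2 := Real.sin_sq_add_cos_sq (t/2)
    linarith
  have hnormsq : ‖1 - (r : ℂ) * Complex.exp (t * Complex.I)‖ ^ 2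
      = 1 - 2 * r * Real.cos t + r ^ 2 := by
    rw [Complex.sq_norm]
    simp [Complex.normSq_apply, Complex.exp_ofReal_mul_I_re, Complex.exp_ofReal_mul_I_im]
    nlinarith [Real.sin_sq_add_cos_sq t]
  have hc1 : Real.cos t ≤ 1 := Real.cos_le_one t
  have hc2 : -1 ≤ Real.cos t := Real.neg_one_le_cos t
  have key : (t / π) ^ 2 ≤ ‖1 - (r : ℂ) * Complex.exp (t * Complex.I)‖ ^ 2 := by
    rw [hnormsq]
    have h1 : (t/π)^2 ≤ Real.sin (t/2)^2 := by
      have h0 : 0 ≤ t / π := by positivity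
      nlinarith
    rw [hsq] at h1
    nlinarith [mul_nonneg (sub_nonneg.2 hc1) (by nlinarith : (0:ℝ) ≤ r^2 + 2*r),
      mul_nonneg (by linarith : (0:ℝ) ≤ 1 + Real.cos t) (sq_nonneg (1-r)), h1]
  have h0 : 0 ≤ t / π := by positivity
  nlinarith [norm_nonneg (1 - (r : ℂ) * Complex.exp (t * Complex.I)), key]

lemma aux_J_bound {α : ℝ} (hα0 : 0 < α) (hα2 : α < 1/2) {a : ℂ} (ha : ‖a‖ < 1) :
    ∫ θ in (0:ℝ)..(2*π), ‖1 - (starRingEnd ℂ) a * Complex.exp (θ * Complex.I)‖ ^ (-(2*α))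
      ≤ 2 * π / (1 - 2*α) := by
  set r : ℝ := ‖a‖ with hr
  have hr0 : 0 ≤ r := norm_nonneg a
  set φ : ℝ := Complex.arg a with hφ
  set h₀ : ℝ → ℝ := fun t => ‖1 - (r : ℂ) * Complex.exp (t * Complex.I)‖ ^ (-(2*α)) with hh₀
  -- continuity of h₀
  have hbase : ∀ t : ℝ, (1 : ℂ) - (r:ℂ) * Complex.exp (t * Complex.I) ≠ 0 := by
    intro t
    apply aux_one_sub_ne
    rw [norm_mul, Complex.norm_real, Complex.norm_exp_ofReal_mul_I, mul_one,
      Real.norm_eq_abs, _root_.abs_of_nonneg hr0]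
    exact ha
  have hcont : Continuous h₀ := by
    apply Continuous.rpow_const
    · exact (continuous_const.sub (continuous_const.mul
        (Complex.continuous_exp.comp (Complex.continuous_ofReal.mul continuous_const)))).norm
    · intro t; exact Or.inl (norm_ne_zero_iff.mpr (hbase t))
  have hper : Function.Periodic h₀ (2*π) := by
    intro t
    have : Complex.exp (↑(t + 2*π) * Complex.I) = Complex.exp (t * Complex.I) := by
      push_cast
      rw [add_mul, Complex.exp_add, Complex.exp_two_pi_mul_I, mul_one]
    simp only [hh₀, this]
  -- step 1: rewrite integrand as shift of h₀
  have hconj : (starRingEnd ℂ) a = (r : ℂ) * Complex.exp (-φ * Complex.I) := by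
    conv_lhs => rw [← Complex.norm_mul_exp_arg_mul_I a]
    rw [map_mul, ← Complex.exp_conj, map_mul, Complex.conj_I, Complex.conj_ofReal,
      Complex.conj_ofReal]
    have habs : ((‖a‖ : ℝ) : ℂ) = (r:ℂ) := by rw [hr]
    rw [habs, hφ]
    ring_nf
  have hshift : ∀ θ : ℝ, ‖1 - (starRingEnd ℂ) a * Complex.exp (θ * Complex.I)‖ ^ (-(2*α))
      = h₀ (θ - φ) := by
    intro θ
    rw [hconj]
    congr 3
    rw [mul_assoc, ← Complex.exp_add]
    push_cast
    ring_nf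
  rw [intervalIntegral.integral_congr (g := fun θ => h₀ (θ - φ)) (fun θ _ => hshift θ)]
  rw [intervalIntegral.integral_comp_sub_right h₀ φ]
  have hzs : (0:ℝ) - φ = -φ := by ring
  have h2s : 2*π - φ = -φ + 2*π := by ring
  rw [hzs, h2s, hper.intervalIntegral_add_eq (-φ) 0, zero_add]
  -- split [0, 2π] = [0, π] ∪ [π, 2π]
  have hint1 : IntervalIntegrable h₀ volume 0 π := hcont.intervalIntegrable _ _
  have hint2 : IntervalIntegrable h₀ volume π (2*π) := hcont.intervalIntegrable _ _
  rw [← intervalIntegral.integral_add_adjacent_intervals hint1 hint2]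
  -- reflection: ∫_π^{2π} = ∫_0^π
  have hrefl : ∫ t in π..(2*π), h₀ t = ∫ t in (0:ℝ)..π, h₀ t := by
    have hcomp := intervalIntegral.integral_comp_sub_left (a := (0:ℝ)) (b := π) h₀ (2*π)
    rw [show 2*π - π = π by ring, show 2*π - 0 = 2*π by ring] at hcomp
    rw [← hcomp]
    apply intervalIntegral.integral_congr
    intro x _
    simp only [hh₀]
    congr 1
    have h1 : Complex.exp (↑(2*π - x) * Complex.I) = Complex.exp (↑(-x) * Complex.I) := by
      rw [show (2*π - x : ℝ) = -x + 2*π by ring]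
      push_cast
      rw [add_mul, Complex.exp_add, Complex.exp_two_pi_mul_I, mul_one]
    rw [h1]
    have h2 : (1 : ℂ) - (r:ℂ) * Complex.exp (↑(-x) * Complex.I)
        = (starRingEnd ℂ) (1 - (r:ℂ) * Complex.exp (x * Complex.I)) := by
      rw [map_sub, map_mul, map_one, ← Complex.exp_conj, map_mul, Complex.conj_ofReal,
        Complex.conj_I, Complex.conj_ofReal]
      push_cast
      ring_nf
    rw [h2, RCLike.norm_conj]
  rw [hrefl]
  -- bound ∫_0^π h₀ ≤ π / (1 - 2α)
  have hmono : ∫ t in (0:ℝ)..π, h₀ t ≤ ∫ t in (0:ℝ)..π, π ^ (2*α) * t ^ (-(2*α)) := by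
    apply intervalIntegral.integral_mono_ae_restrict Real.pi_pos.le
      (hcont.intervalIntegrable _ _)
      ((intervalIntegral.intervalIntegrable_rpow' (by linarith)).const_mul _)
    have h0 : ∀ᵐ t : ℝ ∂volume, t ≠ 0 := by
      rw [MeasureTheory.ae_iff]
      convert Real.volume_singleton (a := (0:ℝ)) using 2
      ext t; simp
    filter_upwards [MeasureTheory.ae_restrict_mem measurableSet_Icc,
      MeasureTheory.ae_restrict_of_ae h0] with t ht htne
    have ht0 : 0 < t := lt_of_le_of_ne ht.1 (Ne.symm htne)
    have hlb : t / π ≤ ‖1 - (r : ℂ) * Complex.exp (t * Complex.I)‖ :=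
      aux_norm_lb hr0 ht0.le ht.2
    have hdiv : 0 < t / π := by positivity
    calc h₀ t ≤ (t / π) ^ (-(2*α)) :=
          Real.rpow_le_rpow_of_nonpos hdiv hlb (by linarith)
      _ = π ^ (2*α) * t ^ (-(2*α)) := by
          rw [Real.div_rpow ht0.le Real.pi_pos.le, Real.rpow_neg Real.pi_pos.le,
            div_eq_mul_inv, inv_inv, mul_comm]
  have hval : ∫ t in (0:ℝ)..π, π ^ (2*α) * t ^ (-(2*α)) = π / (1 - 2*α) := by
    rw [intervalIntegral.integral_const_mul, integral_rpow (Or.inl (by linarith))]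
    rw [Real.zero_rpow (by linarith : -(2*α) + 1 ≠ 0)]
    rw [sub_zero, ← mul_div_assoc, ← Real.rpow_add Real.pi_pos,
      show 2*α + (-(2*α)+1) = 1 by ring, Real.rpow_one, show -(2*α)+1 = 1-2*α by ring]
  have hone : ∫ t in (0:ℝ)..π, h₀ t ≤ π / (1 - 2*α) := hmono.trans (le_of_eq hval)
  have h12 : (0:ℝ) < 1 - 2*α := by linarith
  have hsum : π/(1-2*α) + π/(1-2*α) = 2*π/(1-2*α) := by field_simp; ring
  linarith

/-- If `f` is analytic on the unit disk and Hölder continuous of order `α ∈ (0,1/2)` on the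
closed disk with Hölder constant `A`, then
`sup_{a∈D} (1-|a|²)^{-2α} ∫_T |f(σ_a(ξ)) − f(a)|² |dξ| ≤ C A²` with `C = C(α)`. -/
theorem holder_implies_campanato (α : ℝ) (hα : α ∈ Set.Ioo (0:ℝ) (1/2)) :
    ∃ C > 0, ∀ (f : ℂ → ℂ) (A : ℝ),
      DifferentiableOn ℂ f (Metric.ball (0:ℂ) 1) →
      (∀ ξ₁ ∈ Metric.closedBall (0:ℂ) 1, ∀ ξ₂ ∈ Metric.closedBall (0:ℂ) 1,
        ‖f ξ₁ - f ξ₂‖ ≤ A * ‖ξ₁ - ξ₂‖ ^ α) →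
      ∀ a ∈ Metric.ball (0:ℂ) 1,
        (1 - ‖a‖ ^ 2) ^ (-(2 * α)) * bnormSq (fun ξ => f (mSigma a ξ) - f a) ≤ C * A ^ 2 := by
  obtain ⟨hα0, hα2⟩ := hα
  have h12 : (0:ℝ) < 1 - 2*α := by linarith
  refine ⟨2 * π / (1 - 2*α), by positivity, ?_⟩
  intro f A _hdiff hHold a ha
  rw [Metric.mem_ball, dist_zero_right] at ha
  have ha2 : 0 < 1 - ‖a‖^2 := by nlinarith [norm_nonneg a]
  have hA : 0 ≤ A := by
    have h := hHold 1 (by simp) (-1) (by simp)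
    have h2 : (0:ℝ) < ‖(1:ℂ) - -1‖ ^ α := by
      rw [show (1:ℂ) - -1 = 2 by ring]
      have : (0:ℝ) < ‖(2:ℂ)‖ := by simp
      positivity
    nlinarith [norm_nonneg (f 1 - f (-1))]
  -- pointwise bound
  have hpt : ∀ θ : ℝ, ‖f (mSigma a (Complex.exp (θ * Complex.I))) - f a‖ ^ 2
      ≤ A^2 * ((1 - ‖a‖^2) ^ (2*α) *
        ‖1 - (starRingEnd ℂ) a * Complex.exp (θ * Complex.I)‖ ^ (-(2*α))) := by
    intro θ
    set ξ : ℂ := Complex.exp (θ * Complex.I) with hξdef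
    have hξ : ‖ξ‖ = 1 := Complex.norm_exp_ofReal_mul_I θ
    have hden_lt : ‖(starRingEnd ℂ) a * ξ‖ < 1 := by
      rw [norm_mul, RCLike.norm_conj, hξ, mul_one]; exact ha
    have hd : (1:ℂ) - (starRingEnd ℂ) a * ξ ≠ 0 := aux_one_sub_ne hden_lt
    have hdn : 0 < ‖(1:ℂ) - (starRingEnd ℂ) a * ξ‖ := norm_pos_iff.mpr hd
    -- conj a * a = ‖a‖²
    have hca : (starRingEnd ℂ) a * a = ((‖a‖^2 : ℝ) : ℂ) := by
      rw [← Complex.normSq_eq_norm_sq, ← Complex.normSq_eq_conj_mul_self]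
    -- norm of mSigma a ξ - a
    have hσ_sub : mSigma a ξ - a = ξ * ((starRingEnd ℂ) a * a - 1) / (1 - (starRingEnd ℂ) a * ξ) := by
      unfold mSigma
      rw [eq_div_iff hd, sub_mul, div_mul_cancel₀ _ hd]
      ring
    have hnum : ‖ξ * ((starRingEnd ℂ) a * a - 1)‖ = 1 - ‖a‖^2 := by
      rw [norm_mul, hξ, one_mul, hca]
      rw [show (((‖a‖^2 : ℝ)) : ℂ) - 1 = (((‖a‖^2 - 1 : ℝ)) : ℂ) by push_cast; ring]
      rw [Complex.norm_real, Real.norm_eq_abs, abs_of_nonpos (by linarith)]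
      ring
    have hnorm : ‖mSigma a ξ - a‖ = (1 - ‖a‖^2) / ‖1 - (starRingEnd ℂ) a * ξ‖ := by
      rw [hσ_sub, norm_div, hnum]
    -- mSigma a ξ on the unit circle
    have hmem : mSigma a ξ ∈ Metric.closedBall (0:ℂ) 1 := by
      rw [Metric.mem_closedBall, dist_zero_right]
      unfold mSigma
      rw [norm_div]
      have hden_eq : ‖(1:ℂ) - (starRingEnd ℂ) a * ξ‖ = ‖a - ξ‖ := by
        have hξξ : ξ * (starRingEnd ℂ) ξ = 1 := by
          rw [Complex.mul_conj]
          rw [show Complex.normSq ξ = ‖ξ‖^2 by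
            rw [Complex.sq_norm], hξ]
          norm_num
        have : (1:ℂ) - (starRingEnd ℂ) a * ξ = ξ * ((starRingEnd ℂ) ξ - (starRingEnd ℂ) a) := by
          rw [mul_sub, hξξ]; ring
        rw [this, norm_mul, hξ, one_mul, ← map_sub, RCLike.norm_conj, norm_sub_rev]
      rw [hden_eq]
      exact div_self_le_one _
    have hAmem : a ∈ Metric.closedBall (0:ℂ) 1 := by
      rw [Metric.mem_closedBall, dist_zero_right]; exact ha.le
    have hH := hHold (mSigma a ξ) hmem a hAmem
    rw [hnorm] at hH
    set s : ℝ := (1 - ‖a‖^2) / ‖1 - (starRingEnd ℂ) a * ξ‖ with hs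
    have hs0 : 0 < s := div_pos ha2 hdn
    have hsq : ‖f (mSigma a ξ) - f a‖ ^ 2 ≤ (A * s ^ α) ^ 2 := by
      apply pow_le_pow_left₀ (norm_nonneg _) hH
    have hrw : (A * s ^ α) ^ 2 = A^2 * s ^ (2*α) := by
      rw [mul_pow, ← Real.rpow_natCast (s ^ α) 2, ← Real.rpow_mul hs0.le]
      push_cast
      ring_nf
    have hsplit : s ^ (2*α) = (1 - ‖a‖^2) ^ (2*α) *
        ‖(1:ℂ) - (starRingEnd ℂ) a * ξ‖ ^ (-(2*α)) := by
      rw [hs, Real.div_rpow ha2.le (norm_nonneg _), Real.rpow_neg (norm_nonneg _),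
        div_eq_mul_inv]
    calc ‖f (mSigma a ξ) - f a‖ ^ 2 ≤ (A * s ^ α) ^ 2 := hsq
      _ = A^2 * ((1 - ‖a‖^2) ^ (2*α) * ‖(1:ℂ) - (starRingEnd ℂ) a * ξ‖ ^ (-(2*α))) := by
          rw [hrw, hsplit]
  -- integral bound
  set g : ℝ → ℝ := fun θ => A^2 * ((1 - ‖a‖^2) ^ (2*α) *
    ‖1 - (starRingEnd ℂ) a * Complex.exp (θ * Complex.I)‖ ^ (-(2*α))) with hg
  have hbase : ∀ t : ℝ, ‖(1:ℂ) - (starRingEnd ℂ) a * Complex.exp (t * Complex.I)‖ ≠ 0 := by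
    intro t
    refine norm_ne_zero_iff.mpr (aux_one_sub_ne ?_)
    rw [norm_mul, RCLike.norm_conj, Complex.norm_exp_ofReal_mul_I, mul_one]
    exact ha
  have hgcont : Continuous g := by
    apply Continuous.mul continuous_const
    apply Continuous.mul continuous_const
    apply Continuous.rpow_const
    · exact (continuous_const.sub (continuous_const.mul
        (Complex.continuous_exp.comp (Complex.continuous_ofReal.mul continuous_const)))).norm
    · intro t; exact Or.inl (hbase t)
  have hI : bnormSq (fun ξ => f (mSigma a ξ) - f a) ≤ A^2 * ((1 - ‖a‖^2) ^ (2*α) *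
      ∫ θ in (0:ℝ)..(2*π), ‖1 - (starRingEnd ℂ) a * Complex.exp (θ * Complex.I)‖ ^ (-(2*α))) := by
    have hrhs : ∫ θ in (0:ℝ)..(2*π), g θ = A^2 * ((1 - ‖a‖^2) ^ (2*α) *
        ∫ θ in (0:ℝ)..(2*π), ‖1 - (starRingEnd ℂ) a * Complex.exp (θ * Complex.I)‖ ^ (-(2*α))) := by
      rw [hg]
      rw [intervalIntegral.integral_const_mul, intervalIntegral.integral_const_mul]
    rw [← hrhs]
    unfold bnormSq
    by_cases hint : IntervalIntegrable
        (fun θ => ‖f (mSigma a (Complex.exp (θ * Complex.I))) - f a‖ ^ 2) volume 0 (2*π)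
    · apply intervalIntegral.integral_mono_on (by positivity) hint
        (hgcont.intervalIntegrable _ _)
      intro θ _
      exact hpt θ
    · rw [intervalIntegral.integral_undef hint]
      apply intervalIntegral.integral_nonneg (by positivity)
      intro θ _
      have h1 : (0:ℝ) ≤ (1 - ‖a‖^2) ^ (2*α) := Real.rpow_nonneg ha2.le _
      have h2 : (0:ℝ) ≤ ‖(1:ℂ) - (starRingEnd ℂ) a * Complex.exp (θ * Complex.I)‖ ^ (-(2*α)) :=
        Real.rpow_nonneg (norm_nonneg _) _
      positivity
  -- combine
  have hJ := aux_J_bound hα0 hα2 ha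
  have hJ0 : (0:ℝ) ≤ ∫ θ in (0:ℝ)..(2*π),
      ‖1 - (starRingEnd ℂ) a * Complex.exp (θ * Complex.I)‖ ^ (-(2*α)) := by
    apply intervalIntegral.integral_nonneg (by positivity)
    intro θ _
    exact Real.rpow_nonneg (norm_nonneg _) _
  have hfac : (0:ℝ) ≤ (1 - ‖a‖ ^ 2) ^ (-(2 * α)) := Real.rpow_nonneg ha2.le _
  have hmul := mul_le_mul_of_nonneg_left hI hfac
  have hcancel : (1 - ‖a‖ ^ 2) ^ (-(2 * α)) * (1 - ‖a‖^2) ^ (2*α) = 1 := by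
    rw [← Real.rpow_add ha2]
    norm_num
  calc (1 - ‖a‖ ^ 2) ^ (-(2 * α)) * bnormSq (fun ξ => f (mSigma a ξ) - f a)
      ≤ (1 - ‖a‖ ^ 2) ^ (-(2 * α)) * (A^2 * ((1 - ‖a‖^2) ^ (2*α) *
        ∫ θ in (0:ℝ)..(2*π), ‖1 - (starRingEnd ℂ) a * Complex.exp (θ * Complex.I)‖ ^ (-(2*α)))) := hmul
    _ = A^2 * ((1 - ‖a‖ ^ 2) ^ (-(2 * α)) * (1 - ‖a‖^2) ^ (2*α)) *
        ∫ θ in (0:ℝ)..(2*π), ‖1 - (starRingEnd ℂ) a * Complex.exp (θ * Complex.I)‖ ^ (-(2*α)) := by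
        ring
    _ = A^2 * ∫ θ in (0:ℝ)..(2*π),
        ‖1 - (starRingEnd ℂ) a * Complex.exp (θ * Complex.I)‖ ^ (-(2*α)) := by
        rw [hcancel, mul_one]
    _ ≤ A^2 * (2 * π / (1 - 2*α)) := mul_le_mul_of_nonneg_left hJ (sq_nonneg A)
    _ = 2 * π / (1 - 2*α) * A ^ 2 := by ring
end

section
/- For p ∈ (1,2), an analytic function f on D belongs to the Campanato space CA_p (i.e., ‖f‖_{CA_p,*} = sup_{a∈D} (1-|a|^2)^{(1-p)/2} ‖f∘σ_a − f(a)‖_2 < ∞) if and only if sup_{a∈D} (1-|a|^2)^{(3-p)/2} |f'(a)| < ∞, i.e., f lies in the analytic Lipschitz space A_{(p-1)/2}. -/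
open Complex Metric Set Real

namespace CampAux

lemma denom_norm_pos {a z : ℂ} (ha : ‖a‖ < 1) (hz : ‖z‖ ≤ 1) :
    0 < ‖1 - (starRingEnd ℂ) a * z‖ := by
  have h : ‖(starRingEnd ℂ) a * z‖ < 1 := by
    rw [norm_mul, RCLike.norm_conj]
    calc ‖a‖ * ‖z‖ ≤ ‖a‖ * 1 := by
          exact mul_le_mul_of_nonneg_left hz (norm_nonneg _)
      _ < 1 := by simpa using ha
  have : ‖(1:ℂ)‖ - ‖(starRingEnd ℂ) a * z‖ ≤ ‖1 - (starRingEnd ℂ) a * z‖ :=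
    norm_sub_norm_le _ _
  simp only [norm_one] at this
  linarith

lemma denom_ne {a z : ℂ} (ha : ‖a‖ < 1) (hz : ‖z‖ ≤ 1) :
    (1 - (starRingEnd ℂ) a * z) ≠ 0 := by
  intro h
  have := denom_norm_pos ha hz
  rw [h] at this; simp at this

lemma normSq_diff (a z : ℂ) :
    Complex.normSq (1 - (starRingEnd ℂ) a * z) - Complex.normSq (a - z)
      = (1 - Complex.normSq a) * (1 - Complex.normSq z) := by
  simp only [Complex.normSq_apply, Complex.sub_re, Complex.sub_im, Complex.mul_re,
    Complex.mul_im, Complex.one_re, Complex.one_im, Complex.conj_re, Complex.conj_im]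
  ring

end CampAux

namespace CampAux

lemma normSq_eq_norm_sq (z : ℂ) : Complex.normSq z = ‖z‖ ^ 2 := by
  rw [Complex.normSq_eq_norm_sq]

lemma norm_mSigma_le {a z : ℂ} (ha : ‖a‖ < 1) (hz : ‖z‖ ≤ 1) : ‖mSigma a z‖ ≤ 1 := by
  rw [mSigma, norm_div, div_le_one (denom_norm_pos ha hz)]
  have h := normSq_diff a z
  have h1 : Complex.normSq a ≤ 1 := by
    rw [normSq_eq_norm_sq]; nlinarith [norm_nonneg a]
  have h2 : Complex.normSq z ≤ 1 := by
    rw [normSq_eq_norm_sq]; nlinarith [norm_nonneg z]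
  have key : Complex.normSq (a - z) ≤ Complex.normSq (1 - (starRingEnd ℂ) a * z) := by
    nlinarith [h]
  rw [normSq_eq_norm_sq, normSq_eq_norm_sq] at key
  nlinarith [norm_nonneg (a - z), norm_nonneg (1 - (starRingEnd ℂ) a * z)]

lemma norm_mSigma_lt {a z : ℂ} (ha : ‖a‖ < 1) (hz : ‖z‖ < 1) : ‖mSigma a z‖ < 1 := by
  rw [mSigma, norm_div, div_lt_one (denom_norm_pos ha hz.le)]
  have h := normSq_diff a z
  have h1 : Complex.normSq a < 1 := by
    rw [normSq_eq_norm_sq]; nlinarith [norm_nonneg a]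
  have h2 : Complex.normSq z < 1 := by
    rw [normSq_eq_norm_sq]; nlinarith [norm_nonneg z]
  have key : Complex.normSq (a - z) < Complex.normSq (1 - (starRingEnd ℂ) a * z) := by
    nlinarith [h]
  rw [normSq_eq_norm_sq, normSq_eq_norm_sq] at key
  nlinarith [norm_nonneg (a - z), norm_nonneg (1 - (starRingEnd ℂ) a * z)]

lemma mSigma_zero (a : ℂ) : mSigma a 0 = a := by simp [mSigma]

lemma mSigma_sub {a z : ℂ} (ha : ‖a‖ < 1) (hz : ‖z‖ ≤ 1) :
    mSigma a z - a = z * ((Complex.normSq a : ℂ) - 1) / (1 - (starRingEnd ℂ) a * z) := by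
  have hd := denom_ne ha hz
  rw [mSigma]
  rw [eq_div_iff hd, sub_mul, div_mul_cancel₀ _ hd]
  have : a * (starRingEnd ℂ) a = (Complex.normSq a : ℂ) := by
    rw [Complex.mul_conj]
  linear_combination z * this

lemma norm_mSigma_sub {a z : ℂ} (ha : ‖a‖ < 1) (hz : ‖z‖ = 1) :
    ‖mSigma a z - a‖ = (1 - ‖a‖ ^ 2) / ‖1 - (starRingEnd ℂ) a * z‖ := by
  rw [mSigma_sub ha hz.le, norm_div, norm_mul, hz, one_mul]
  congr 1
  rw [normSq_eq_norm_sq]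
  have h1 : ‖a‖ ^ 2 ≤ 1 := by nlinarith [norm_nonneg a]
  rw [show ((‖a‖^2 : ℝ) : ℂ) - 1 = (((‖a‖^2 - 1 : ℝ)) : ℂ) by push_cast; ring]
  rw [Complex.norm_real, Real.norm_eq_abs, abs_of_nonpos (by linarith)]
  ring

end CampAux

namespace CampAux

lemma norm_exp_I (ψ : ℝ) : ‖Complex.exp (ψ * Complex.I)‖ = 1 := by
  rw [Complex.norm_exp]
  simp

lemma key_lower {r ψ : ℝ} (hr0 : 0 ≤ r) (hr1 : r ≤ 1) (h0 : 0 ≤ ψ) (hπ : ψ ≤ π) :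
    ψ / (2 * π) ≤ ‖1 - (r : ℂ) * Complex.exp (ψ * Complex.I)‖ := by
  have hpi := Real.pi_pos
  rcases le_or_gt r (1/2) with hr | hr
  · have h1 : ‖(1:ℂ)‖ - ‖(r:ℂ) * Complex.exp (ψ * Complex.I)‖
        ≤ ‖1 - (r:ℂ) * Complex.exp (ψ * Complex.I)‖ := norm_sub_norm_le _ _
    rw [norm_one, norm_mul, norm_exp_I, Complex.norm_real, Real.norm_eq_abs,
      _root_.abs_of_nonneg hr0, mul_one] at h1
    have h2 : ψ / (2 * π) ≤ 1/2 := by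
      rw [div_le_iff₀ (by positivity)]; nlinarith
    linarith
  · have hns : Complex.normSq (1 - (r:ℂ) * Complex.exp (ψ * Complex.I))
        = 1 - 2 * r * Real.cos ψ + r ^ 2 := by
      simp only [Complex.normSq_apply, Complex.sub_re, Complex.sub_im, Complex.mul_re,
        Complex.mul_im, Complex.one_re, Complex.one_im, Complex.ofReal_re, Complex.ofReal_im,
        Complex.exp_ofReal_mul_I_re, Complex.exp_ofReal_mul_I_im]
      nlinarith [Real.sin_sq_add_cos_sq ψ]
    have hsin : ψ / π ≤ Real.sin (ψ / 2) := by
      have := Real.mul_le_sin (x := ψ/2) (by linarith) (by linarith)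
      calc ψ / π = 2 / π * (ψ / 2) := by field_simp
        _ ≤ Real.sin (ψ / 2) := this
    have hcos : Real.sin (ψ/2) ^ 2 = (1 - Real.cos ψ) / 2 := by
      have hc := Real.cos_sq (ψ/2)
      rw [show 2*(ψ/2) = ψ by ring] at hc
      have hsc := Real.sin_sq_add_cos_sq (ψ/2)
      linarith
    have hkey : (ψ / (2*π)) ^ 2 ≤ Complex.normSq (1 - (r:ℂ) * Complex.exp (ψ * Complex.I)) := by
      rw [hns]
      have hψπ : 0 ≤ ψ / π := by positivity
      have h2 : (ψ/π)^2 ≤ Real.sin (ψ/2)^2 := by nlinarith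
      have h3 : (ψ/(2*π))^2 = (ψ/π)^2 / 4 := by
        field_simp
        try ring
        try tauto
      nlinarith [sq_nonneg (1 - r)]
    rw [Complex.norm_def]
    have := Real.sqrt_le_sqrt hkey
    rwa [Real.sqrt_sq (by positivity)] at this

end CampAux

namespace CampAux

open MeasureTheory intervalIntegral

lemma kernel_bound {q : ℝ} (hq0 : 0 < q) (hq1 : q < 1) :
    ∃ K : ℝ, 0 ≤ K ∧ ∀ c : ℂ, ‖c‖ < 1 →
      (∫ θ in (0:ℝ)..(2*π), ‖1 - c * Complex.exp (θ * Complex.I)‖ ^ (-q)) ≤ K := by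
  have hpi := Real.pi_pos
  have h1q : (0:ℝ) < 1 - q := by linarith
  refine ⟨2 * ((2*π)^q * (π ^ (1-q) / (1-q))), by positivity, ?_⟩
  intro c hc
  set r : ℝ := ‖c‖ with hr
  have hr0 : 0 ≤ r := norm_nonneg c
  have hr1 : r < 1 := hc
  set G : ℝ → ℝ := fun ψ => ‖1 - (r:ℂ) * Complex.exp (ψ * Complex.I)‖ ^ (-q) with hG
  have hbase : ∀ ψ : ℝ, 0 < ‖1 - (r:ℂ) * Complex.exp (ψ * Complex.I)‖ := by
    intro ψ
    have h1 : ‖(r:ℂ) * Complex.exp (ψ*Complex.I)‖ = r := by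
      rw [norm_mul, norm_exp_I, Complex.norm_real, Real.norm_eq_abs,
        _root_.abs_of_nonneg hr0, mul_one]
    have h2 := norm_sub_norm_le (1:ℂ) ((r:ℂ) * Complex.exp (ψ*Complex.I))
    rw [norm_one, h1] at h2
    linarith
  have hGcont : Continuous G := by
    apply Continuous.rpow_const
    · exact (continuous_const.sub (continuous_const.mul
        (Complex.continuous_exp.comp (Complex.continuous_ofReal.mul continuous_const)))).norm
    · intro ψ; exact Or.inl (ne_of_gt (hbase ψ))
  have hc_eq : ∀ θ:ℝ, c * Complex.exp (θ*Complex.I)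
      = (r:ℂ) * Complex.exp ((θ + Complex.arg c) * Complex.I) := by
    intro θ
    conv_lhs => rw [← Complex.norm_mul_exp_arg_mul_I c]
    rw [mul_assoc, ← Complex.exp_add, hr]
    congr 2
    push_cast
    ring
  have hshift : (∫ θ in (0:ℝ)..(2*π), ‖1 - c * Complex.exp (θ*Complex.I)‖ ^ (-q))
      = ∫ θ in (0:ℝ)..(2*π), G (θ + Complex.arg c) := by
    apply intervalIntegral.integral_congr
    intro θ _
    simp only [hG]
    rw [hc_eq θ]
    norm_cast
  have hGper : Function.Periodic G (2*π) := by
    intro ψ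
    simp only [hG]
    congr 3
    rw [show ((ψ + 2*π :ℝ):ℂ)*Complex.I = (ψ:ℂ)*Complex.I + 2*π*Complex.I by push_cast; ring,
      Complex.exp_add, Complex.exp_two_pi_mul_I, mul_one]
  have hstep2 : (∫ θ in (0:ℝ)..(2*π), G (θ + Complex.arg c)) = ∫ θ in (-π)..π, G θ := by
    rw [intervalIntegral.integral_comp_add_right]
    have e1 : (0:ℝ) + Complex.arg c = Complex.arg c := by ring
    have e2 : 2*π + Complex.arg c = Complex.arg c + 2*π := by ring
    rw [e1, e2, hGper.intervalIntegral_add_eq (Complex.arg c) (-π),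
      show -π + 2*π = π by ring]
  have heven : ∀ x : ℝ, G (-x) = G x := by
    intro x
    simp only [hG]
    congr 1
    have hconj : (1 - (r:ℂ)*Complex.exp (((-x:ℝ):ℂ)*Complex.I))
        = (starRingEnd ℂ) (1 - (r:ℂ)*Complex.exp ((x:ℝ)*Complex.I)) := by
      rw [map_sub, map_one, map_mul, Complex.conj_ofReal, ← Complex.exp_conj]
      congr 2
      simp [Complex.conj_ofReal]
    rw [hconj, RCLike.norm_conj]
  have hsplit : (∫ θ in (-π:ℝ)..π, G θ) = 2 * ∫ θ in (0:ℝ)..π, G θ := by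
    have h1 : (∫ θ in (-π:ℝ)..(0:ℝ), G θ) + ∫ θ in (0:ℝ)..π, G θ = ∫ θ in (-π:ℝ)..π, G θ :=
      intervalIntegral.integral_add_adjacent_intervals
        (hGcont.intervalIntegrable _ _) (hGcont.intervalIntegrable _ _)
    have h2 : (∫ θ in (-π:ℝ)..(0:ℝ), G θ) = ∫ θ in (0:ℝ)..π, G θ := by
      have := intervalIntegral.integral_comp_neg (a := (0:ℝ)) (b := π) (f := G)
      simp only [neg_zero] at this
      rw [← this]
      apply intervalIntegral.integral_congr
      intro x _
      exact heven x
    linarith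
  -- bound on [0, π]
  have hmono : (∫ θ in (0:ℝ)..π, G θ) ≤ (2*π)^q * (π ^ (1-q) / (1-q)) := by
    have hmaj : (∫ θ in (0:ℝ)..π, G θ) ≤ ∫ θ in (0:ℝ)..π, (2*π)^q * θ ^ (-q) := by
      apply intervalIntegral.integral_mono_ae_restrict hpi.le
        (hGcont.intervalIntegrable _ _)
        ((intervalIntegral.intervalIntegrable_rpow' (by linarith)).const_mul _)
      have h0 : (volume : Measure ℝ) {(0:ℝ)} = 0 := Real.volume_singleton
      have hae : ∀ᵐ ψ ∂(volume : Measure ℝ), ψ ≠ 0 := by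
        have h1 := MeasureTheory.measure_eq_zero_iff_ae_notMem.mp h0
        exact h1.mono (fun x hx => by simpa using hx)
      filter_upwards [MeasureTheory.ae_restrict_mem measurableSet_Icc,
        MeasureTheory.ae_restrict_of_ae hae] with ψ hmem hne
      have hψ0 : 0 < ψ := lt_of_le_of_ne hmem.1 (Ne.symm hne)
      have hψπ : ψ ≤ π := hmem.2
      have hlow := key_lower hr0 hr1.le hψ0.le hψπ
      have h2 : ‖1 - (r:ℂ) * Complex.exp (ψ*Complex.I)‖ ^ (-q) ≤ (ψ/(2*π)) ^ (-q) :=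
        Real.rpow_le_rpow_of_nonpos (by positivity) hlow (by linarith)
      calc G ψ ≤ (ψ/(2*π)) ^ (-q) := h2
        _ = (2*π)^q * ψ^(-q) := by
            rw [Real.div_rpow hψ0.le (by positivity), Real.rpow_neg (by positivity : (0:ℝ) ≤ 2*π)]
            field_simp
    have heval : (∫ θ in (0:ℝ)..π, (2*π)^q * θ ^ (-q)) = (2*π)^q * (π ^ (1-q) / (1-q)) := by
      rw [intervalIntegral.integral_const_mul,
        integral_rpow (Or.inl (by linarith : (-1:ℝ) < -q)),
        Real.zero_rpow (by intro h; linarith [h] : -q + 1 ≠ 0),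
        show -q + 1 = 1 - q by ring]
      ring
    calc (∫ θ in (0:ℝ)..π, G θ) ≤ ∫ θ in (0:ℝ)..π, (2*π)^q * θ ^ (-q) := hmaj
      _ = (2*π)^q * (π ^ (1-q) / (1-q)) := heval
  calc (∫ θ in (0:ℝ)..(2*π), ‖1 - c * Complex.exp (θ*Complex.I)‖ ^ (-q))
      = 2 * ∫ θ in (0:ℝ)..π, G θ := by rw [hshift, hstep2, hsplit]
    _ ≤ 2 * ((2*π)^q * (π ^ (1-q) / (1-q))) := by linarith [hmono]

end CampAux

namespace CampAux

open MeasureTheory intervalIntegral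

lemma radial (f : ℂ → ℂ) (hf : DifferentiableOn ℂ f (Metric.ball (0:ℂ) 1))
    {β M : ℝ} (hβ0 : 0 < β) (hM0 : 0 ≤ M)
    (hM : ∀ a ∈ Metric.ball (0:ℂ) 1, ‖deriv f a‖ ≤ M * (1 - ‖a‖) ^ (β-1))
    (u : ℂ) (hu : ‖u‖ = 1) {s t : ℝ} (hs : 0 ≤ s) (hst : s ≤ t) (ht : t < 1) :
    ‖f ((t:ℂ) * u) - f ((s:ℂ) * u)‖ ≤ M/β * ((1-s)^β - (1-t)^β) := by
  have hderiv_cont : ContinuousOn (deriv f) (Metric.ball (0:ℂ) 1) :=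
    ((hf.analyticOnNhd Metric.isOpen_ball).deriv).continuousOn
  have hmem : ∀ τ : ℝ, τ ∈ Set.uIcc s t → (τ:ℂ) * u ∈ Metric.ball (0:ℂ) 1 := by
    intro τ hτ
    rw [Set.uIcc_of_le hst] at hτ
    rw [Metric.mem_ball, dist_zero_right, norm_mul, hu, mul_one, Complex.norm_real,
      Real.norm_eq_abs, _root_.abs_of_nonneg (le_trans hs hτ.1)]
    exact lt_of_le_of_lt hτ.2 ht
  set g' : ℝ → ℂ := fun τ => deriv f ((τ:ℂ) * u) * u with hg'
  have hder : ∀ τ ∈ Set.uIcc s t, HasDerivAt (fun τ : ℝ => f ((τ:ℂ) * u)) (g' τ) τ := by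
    intro τ hτ
    have h1 : HasDerivAt f (deriv f ((τ:ℂ)*u)) ((τ:ℂ)*u) :=
      (hf.differentiableAt (Metric.isOpen_ball.mem_nhds (hmem τ hτ))).hasDerivAt
    have h2 : HasDerivAt (fun w : ℂ => w * u) u ((τ:ℂ)) := by
      simpa using (hasDerivAt_id ((τ:ℂ))).mul_const u
    have h3 : HasDerivAt (fun w : ℂ => f (w * u)) (deriv f ((τ:ℂ)*u) * u) ((τ:ℂ)) := by
      exact (HasDerivAt.comp ((τ:ℂ)) h1 h2)
    exact h3.comp_ofReal
  have hg'cont : ContinuousOn g' (Set.uIcc s t) := by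
    apply ContinuousOn.mul _ continuousOn_const
    exact hderiv_cont.comp
      ((Complex.continuous_ofReal.continuousOn).mul continuousOn_const) hmem
  have hint : IntervalIntegrable g' volume s t := hg'cont.intervalIntegrable
  have hftc : (∫ τ in s..t, g' τ) = f ((t:ℂ)*u) - f ((s:ℂ)*u) :=
    intervalIntegral.integral_eq_sub_of_hasDerivAt hder hint
  -- bound
  have hbound : ∀ τ ∈ Set.uIoc s t, ‖g' τ‖ ≤ M * (1-τ)^(β-1) := by
    intro τ hτ
    rw [Set.uIoc_of_le hst] at hτ
    have hmem' := hmem τ (by rw [Set.uIcc_of_le hst]; exact ⟨le_of_lt hτ.1, hτ.2⟩)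
    have := hM _ hmem'
    rw [hg']
    rw [norm_mul, hu, mul_one]
    calc ‖deriv f ((τ:ℂ)*u)‖ ≤ M * (1 - ‖(τ:ℂ)*u‖) ^ (β-1) := this
      _ = M * (1-τ)^(β-1) := by
          rw [norm_mul, hu, mul_one, Complex.norm_real, Real.norm_eq_abs,
            _root_.abs_of_nonneg (le_trans hs (le_of_lt hτ.1))]
  have hmaj_cont : ContinuousOn (fun τ : ℝ => M * (1-τ)^(β-1)) (Set.uIcc s t) := by
    apply ContinuousOn.mul continuousOn_const
    apply ContinuousOn.rpow_const (continuousOn_const.sub continuousOn_id)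
    intro τ hτ
    rw [Set.uIcc_of_le hst] at hτ
    left
    have : τ < 1 := lt_of_le_of_lt hτ.2 ht
    intro h; rw [Pi.sub_apply, sub_eq_zero] at h; exact absurd h.symm (ne_of_lt this)
  have hmaj_int : IntervalIntegrable (fun τ : ℝ => M * (1-τ)^(β-1)) volume s t :=
    hmaj_cont.intervalIntegrable
  have heval : (∫ τ in s..t, M * (1-τ)^(β-1)) = M/β * ((1-s)^β - (1-t)^β) := by
    have hFder : ∀ τ ∈ Set.uIcc s t,
        HasDerivAt (fun τ : ℝ => -(M/β) * (1-τ)^β) (M * (1-τ)^(β-1)) τ := by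
      intro τ hτ
      rw [Set.uIcc_of_le hst] at hτ
      have h1τ : (1:ℝ) - τ ≠ 0 := by
        have : τ < 1 := lt_of_le_of_lt hτ.2 ht
        intro h; rw [sub_eq_zero] at h; exact absurd h.symm (ne_of_lt this)
      have hrp : HasDerivAt (fun x : ℝ => x ^ β) (β * (1-τ) ^ (β-1)) (1-τ) :=
        Real.hasDerivAt_rpow_const (Or.inl h1τ)
      have hin : HasDerivAt (fun τ : ℝ => 1 - τ) (-1) τ := by
        simpa using HasDerivAt.const_sub (1:ℝ) (hasDerivAt_id' τ)
      have := (hrp.comp τ hin).const_mul (-(M/β))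
      refine this.congr_deriv ?_
      field_simp
    rw [intervalIntegral.integral_eq_sub_of_hasDerivAt hFder hmaj_int]
    ring
  rw [← hftc]
  calc ‖∫ τ in s..t, g' τ‖ ≤ |∫ τ in s..t, M * (1-τ)^(β-1)| :=
        intervalIntegral.norm_integral_le_abs_of_norm_le
          (by filter_upwards [MeasureTheory.ae_restrict_mem measurableSet_uIoc] with τ hτ
              exact hbound τ hτ) hmaj_int
    _ = M/β * ((1-s)^β - (1-t)^β) := by
        rw [heval, _root_.abs_of_nonneg]
        have h1 : (1-t)^β ≤ (1-s)^β := by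
          apply Real.rpow_le_rpow (by linarith) (by linarith) hβ0.le
        have : 0 ≤ M/β := div_nonneg hM0 hβ0.le
        nlinarith

end CampAux

namespace CampAux

lemma extend_closure {C β : ℝ} (hβ : 0 < β) {f : ℂ → ℂ}
    (hfc : ContinuousOn f (Metric.closedBall (0:ℂ) 1))
    (h : ∀ z ∈ Metric.ball (0:ℂ) 1, ∀ w ∈ Metric.ball (0:ℂ) 1,
      ‖f z - f w‖ ≤ C * ‖z - w‖ ^ β) :
    ∀ z ∈ Metric.closedBall (0:ℂ) 1, ∀ w ∈ Metric.closedBall (0:ℂ) 1,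
      ‖f z - f w‖ ≤ C * ‖z - w‖ ^ β := by
  have hclos : closure (Metric.ball (0:ℂ) 1) = Metric.closedBall (0:ℂ) 1 :=
    closure_ball 0 one_ne_zero
  have hrpow : ∀ w : ℂ, ContinuousOn (fun z : ℂ => C * ‖z - w‖ ^ β) Set.univ := by
    intro w
    apply ContinuousOn.mul continuousOn_const
    apply ContinuousOn.rpow_const ((continuous_id.sub continuous_const).norm.continuousOn)
    intro z _; exact Or.inr hβ.le
  -- step 1: extend in first variable
  have step1 : ∀ w ∈ Metric.ball (0:ℂ) 1, ∀ z ∈ Metric.closedBall (0:ℂ) 1,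
      ‖f z - f w‖ ≤ C * ‖z - w‖ ^ β := by
    intro w hw
    have hfc' : ContinuousOn f (closure (Metric.ball (0:ℂ) 1)) := by
      rw [hclos]; exact hfc
    have := le_on_closure (f := fun z => ‖f z - f w‖) (g := fun z => C * ‖z - w‖ ^ β)
      (s := Metric.ball (0:ℂ) 1) (fun z hz => h z hz w hw)
      ((hfc'.sub continuousOn_const).norm)
      (((hrpow w).mono (Set.subset_univ _)))
    intro z hz
    exact this (by rw [hclos]; exact hz)
  -- step 2
  intro z hz w hw
  have key : ∀ w' ∈ Metric.ball (0:ℂ) 1, ‖f z - f w'‖ ≤ C * ‖z - w'‖ ^ β := by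
    intro w' hw'
    exact step1 w' hw' z hz
  have hcont1 : ContinuousOn (fun w' : ℂ => ‖f z - f w'‖)
      (closure (Metric.ball (0:ℂ) 1)) := by
    rw [hclos]
    exact (continuousOn_const.sub hfc).norm
  have hcont2 : ContinuousOn (fun w' : ℂ => C * ‖z - w'‖ ^ β)
      (closure (Metric.ball (0:ℂ) 1)) := by
    apply ContinuousOn.mul continuousOn_const
    apply ContinuousOn.rpow_const ((continuous_const.sub continuous_id).norm.continuousOn)
    intro x _; exact Or.inr hβ.le
  exact le_on_closure key hcont1 hcont2 (by rw [hclos]; exact hw)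

end CampAux

namespace CampAux

lemma hoelder (f : ℂ → ℂ) (hf : DifferentiableOn ℂ f (Metric.ball (0:ℂ) 1))
    (hfc : ContinuousOn f (Metric.closedBall (0:ℂ) 1))
    {β M : ℝ} (hβ0 : 0 < β) (hβ1 : β < 1) (hM0 : 0 ≤ M)
    (hM : ∀ a ∈ Metric.ball (0:ℂ) 1, ‖deriv f a‖ ≤ M * (1 - ‖a‖) ^ (β-1)) :
    ∃ C : ℝ, 0 ≤ C ∧ ∀ z ∈ Metric.closedBall (0:ℂ) 1, ∀ w ∈ Metric.closedBall (0:ℂ) 1,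
      ‖f z - f w‖ ≤ C * ‖z - w‖ ^ β := by
  obtain ⟨S, hS⟩ := (isCompact_closedBall (0:ℂ) 1).exists_bound_of_continuousOn hfc
  set S' : ℝ := max S 0 with hS'
  have hS'0 : 0 ≤ S' := le_max_right _ _
  have hSb : ∀ x ∈ Metric.closedBall (0:ℂ) 1, ‖f x‖ ≤ S' :=
    fun x hx => le_trans (hS x hx) (le_max_left _ _)
  set C : ℝ := 2*S' + M * (2/β + 3) with hC
  have hC0 : 0 ≤ C := by
    have h1 : 0 ≤ M * (2/β + 3) := by positivity
    rw [hC]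
    linarith
  refine ⟨C, hC0, ?_⟩
  apply extend_closure hβ0 hfc
  intro z hz w hw
  rw [Metric.mem_ball, dist_zero_right] at hz hw
  set δ : ℝ := ‖z - w‖ with hδ
  have hδ0 : 0 ≤ δ := norm_nonneg _
  rcases eq_or_lt_of_le hδ0 with hδe | hδpos
  · -- δ = 0
    have : z = w := by
      have := hδe.symm
      rw [hδ, norm_sub_eq_zero_iff] at this  -- may need name fix
      exact this
    subst this
    simp [Real.zero_rpow (ne_of_gt hβ0), ← hδe]
  rcases le_or_gt 1 δ with hδ1 | hδ1
  · -- δ ≥ 1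
    have h1 : ‖f z - f w‖ ≤ 2 * S' := by
      calc ‖f z - f w‖ ≤ ‖f z‖ + ‖f w‖ := norm_sub_le _ _
        _ ≤ S' + S' := add_le_add
            (hSb z (Metric.mem_closedBall.mpr (by rw [dist_zero_right]; linarith)))
            (hSb w (Metric.mem_closedBall.mpr (by rw [dist_zero_right]; linarith)))
        _ = 2 * S' := by ring
    have h2 : (1:ℝ) ≤ δ ^ β := by
      calc (1:ℝ) = 1 ^ β := (Real.one_rpow β).symm
        _ ≤ δ ^ β := Real.rpow_le_rpow (by norm_num) hδ1 hβ0.le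
    have h3 : 0 ≤ δ ^ β := Real.rpow_nonneg hδ0 β
    have h4 : 0 ≤ M * (2/β + 3) := by positivity
    calc ‖f z - f w‖ ≤ 2*S' := h1
      _ = 2*S' * 1 := by ring
      _ ≤ 2*S' * (δ ^ β) := by nlinarith
      _ ≤ C * δ ^ β := by rw [hC]; nlinarith
  · -- 0 < δ < 1
    set r : ℝ := 1 - δ with hrdef
    have hr0 : 0 < r := by simp only [hrdef]; linarith
    have hr1 : r < 1 := by simp only [hrdef]; linarith
    set pt : ℂ → ℂ := fun v => if ‖v‖ ≤ r then v else ((r / ‖v‖ : ℝ):ℂ) * v with hpt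
    have hpt_norm : ∀ v : ℂ, ‖v‖ < 1 → ‖pt v‖ ≤ r := by
      intro v hv
      simp only [hpt]
      split_ifs with h
      · exact h
      · push_neg at h
        have hv0 : 0 < ‖v‖ := lt_trans hr0 h
        rw [norm_mul, Complex.norm_real, Real.norm_eq_abs,
          _root_.abs_of_nonneg (by positivity : (0:ℝ) ≤ r / ‖v‖)]
        rw [div_mul_cancel₀ _ (ne_of_gt hv0)]
    have hpt_dist : ∀ v : ℂ, ‖v‖ < 1 → ‖v - pt v‖ ≤ δ := by
      intro v hv
      simp only [hpt]
      split_ifs with h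
      · simpa using hδ0
      · push_neg at h
        have hv0 : 0 < ‖v‖ := lt_trans hr0 h
        have : v - ((r / ‖v‖ : ℝ):ℂ) * v = ((1 - r / ‖v‖ : ℝ):ℂ) * v := by
          push_cast; ring
        rw [this, norm_mul, Complex.norm_real, Real.norm_eq_abs,
          _root_.abs_of_nonneg (by
            rw [sub_nonneg, div_le_one hv0]; exact h.le)]
        rw [sub_mul, one_mul, div_mul_cancel₀ _ (ne_of_gt hv0)]
        simp only [hrdef]; linarith
    have hpt_f : ∀ v : ℂ, ‖v‖ < 1 → ‖f v - f (pt v)‖ ≤ M/β * δ ^ β := by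
      intro v hv
      have hMβ : 0 ≤ M/β := div_nonneg hM0 hβ0.le
      have hδβ : 0 ≤ δ ^ β := Real.rpow_nonneg hδ0 β
      simp only [hpt]
      split_ifs with h
      · simp; positivity
      · push_neg at h
        have hv0 : 0 < ‖v‖ := lt_trans hr0 h
        set u : ℂ := ((‖v‖⁻¹ : ℝ):ℂ) * v with hu
        have hu1 : ‖u‖ = 1 := by
          rw [hu, norm_mul, Complex.norm_real, Real.norm_eq_abs,
            _root_.abs_of_nonneg (by positivity), inv_mul_cancel₀ (ne_of_gt hv0)]
        have hv_eq : ((‖v‖:ℝ):ℂ) * u = v := by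
          rw [hu, ← mul_assoc]
          rw [show ((‖v‖:ℝ):ℂ) * ((‖v‖⁻¹ : ℝ):ℂ) = ((‖v‖ * ‖v‖⁻¹ : ℝ):ℂ) by push_cast; ring]
          rw [mul_inv_cancel₀ (ne_of_gt hv0)]
          simp
        have hpt_eq : ((r:ℝ):ℂ) * u = ((r / ‖v‖ : ℝ):ℂ) * v := by
          rw [hu, ← mul_assoc]
          push_cast
          field_simp
        have := radial f hf hβ0 hM0 hM u hu1 (s := r) (t := ‖v‖) hr0.le h.le hv
        rw [hv_eq, hpt_eq] at this
        calc ‖f v - f (((r / ‖v‖ : ℝ):ℂ) * v)‖ ≤ M/β * ((1-r)^β - (1-‖v‖)^β) := this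
          _ ≤ M/β * δ ^ β := by
              have h1 : (1 - r : ℝ) = δ := by simp only [hrdef]; ring
              rw [h1]
              have h2 : 0 ≤ (1-‖v‖ : ℝ)^β := Real.rpow_nonneg (by linarith) β
              nlinarith
    -- middle estimate
    have hmid : ‖f (pt z) - f (pt w)‖ ≤ M * δ^(β-1) * (3*δ) := by
      have hsub : Metric.closedBall (0:ℂ) r ⊆ Metric.ball (0:ℂ) 1 :=
        Metric.closedBall_subset_ball hr1
      have hdiff : ∀ x ∈ Metric.closedBall (0:ℂ) r, DifferentiableAt ℂ f x :=
        fun x hx => hf.differentiableAt (Metric.isOpen_ball.mem_nhds (hsub hx))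
      have hbound : ∀ x ∈ Metric.closedBall (0:ℂ) r, ‖fderiv ℂ f x‖ ≤ M * δ^(β-1) := by
        intro x hx
        rw [Metric.mem_closedBall, dist_zero_right] at hx
        have h1 : ‖fderiv ℂ f x‖ = ‖deriv f x‖ := by
          rw [← toSpanSingleton_deriv, ContinuousLinearMap.norm_toSpanSingleton]
        rw [h1]
        calc ‖deriv f x‖ ≤ M * (1 - ‖x‖)^(β-1) :=
              hM x (hsub (Metric.mem_closedBall.mpr (by rwa [dist_zero_right])))
          _ ≤ M * δ^(β-1) := by
              apply mul_le_mul_of_nonneg_left _ hM0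
              apply Real.rpow_le_rpow_of_nonpos hδpos (by linarith) (by linarith)
      have h3δ : ‖pt z - pt w‖ ≤ 3*δ := by
        have h1 := hpt_dist z hz
        have h2 := hpt_dist w hw
        calc ‖pt z - pt w‖ = ‖(pt z - z) + (z - w) + (w - pt w)‖ := by ring_nf
          _ ≤ ‖pt z - z‖ + ‖z - w‖ + ‖w - pt w‖ := by
              exact le_trans (norm_add_le _ _) (by
                have := norm_add_le (pt z - z) (z - w)
                linarith)
          _ ≤ δ + δ + δ := by
              rw [norm_sub_rev (pt z) z]
              exact add_le_add (add_le_add h1 (le_of_eq rfl)) h2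
          _ = 3*δ := by ring
      have hmz : pt z ∈ Metric.closedBall (0:ℂ) r :=
        Metric.mem_closedBall.mpr (by rw [dist_zero_right]; exact hpt_norm z hz)
      have hmw : pt w ∈ Metric.closedBall (0:ℂ) r :=
        Metric.mem_closedBall.mpr (by rw [dist_zero_right]; exact hpt_norm w hw)
      have := (convex_closedBall (0:ℂ) r).norm_image_sub_le_of_norm_fderiv_le
        hdiff hbound hmw hmz
      calc ‖f (pt z) - f (pt w)‖ ≤ M * δ^(β-1) * ‖pt z - pt w‖ := this
        _ ≤ M * δ^(β-1) * (3*δ) := by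
            apply mul_le_mul_of_nonneg_left h3δ
            positivity
    -- combine
    have hcomb : ‖f z - f w‖ ≤ M/β * δ^β + (M * δ^(β-1) * (3*δ)) + M/β * δ^β := by
      have h1 := hpt_f z hz
      have h2 := hpt_f w hw
      calc ‖f z - f w‖ = ‖(f z - f (pt z)) + (f (pt z) - f (pt w)) + (f (pt w) - f w)‖ := by
            ring_nf
        _ ≤ ‖f z - f (pt z)‖ + ‖f (pt z) - f (pt w)‖ + ‖f (pt w) - f w‖ := by
            exact le_trans (norm_add_le _ _) (by
              have := norm_add_le (f z - f (pt z)) (f (pt z) - f (pt w))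
              linarith)
        _ ≤ M/β * δ^β + (M * δ^(β-1) * (3*δ)) + M/β * δ^β := by
            rw [norm_sub_rev (f (pt w)) (f w)]
            exact add_le_add (add_le_add h1 hmid) h2
    have hpow : δ^(β-1) * δ = δ^β := by
      nth_rewrite 2 [show δ = δ ^ (1:ℝ) from (Real.rpow_one δ).symm]
      rw [← Real.rpow_add hδpos, show β - 1 + 1 = β by ring]
    have hδβ : 0 ≤ δ^β := Real.rpow_nonneg hδ0 β
    have hrw : M * δ^(β-1) * (3*δ) = 3*M*δ^β := by
      rw [show M * δ^(β-1) * (3*δ) = 3*M*(δ^(β-1)*δ) by ring, hpow]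
    rw [hrw] at hcomb
    have e : M*(2/β+3) = 2*(M/β)+3*M := by ring
    calc ‖f z - f w‖ ≤ M/β * δ^β + 3*M*δ^β + M/β*δ^β := hcomb
      _ = (2*(M/β) + 3*M) * δ^β := by ring
      _ ≤ C * δ^β := by
          apply mul_le_mul_of_nonneg_right _ hδβ
          rw [hC]
          linarith

end CampAux

namespace CampAux

open MeasureTheory intervalIntegral

lemma deriv_bound (g : ℂ → ℂ) (hg : DiffContOnCl ℂ g (Metric.ball (0:ℂ) 1)) :
    ‖deriv g 0‖ ≤ (2*π)⁻¹ * ∫ θ in (0:ℝ)..(2*π), ‖g (Complex.exp (θ*Complex.I)) - g 0‖ := by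
  have hpi := Real.pi_pos
  set h : ℂ → ℂ := fun z => g z - g 0 with hh
  have hh_diff : DiffContOnCl ℂ h (Metric.ball (0:ℂ) 1) := hg.sub_const (g 0)
  have hder : deriv h 0 = deriv g 0 := by
    simp only [hh]
    exact deriv_sub_const (g 0)
  have hcauchy : deriv h 0 = (2 * ↑π * Complex.I)⁻¹ •
      circleIntegral (fun z => (z - 0) ^ (-2:ℤ) • h z) 0 1 := by
    have h2 := hh_diff.deriv_eq_smul_circleIntegral one_pos
    have hne : (2 * ↑π * Complex.I : ℂ) ≠ 0 := by simp [Real.pi_ne_zero]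
    rw [eq_inv_smul_iff₀ hne, ← h2]
    congr 1; funext z; simp [zpow_neg]
  rw [← hder, hcauchy]
  rw [norm_smul]
  have hn1 : ‖(2 * ↑π * Complex.I)⁻¹‖ = (2*π)⁻¹ := by
    rw [norm_inv]
    rw [norm_mul, norm_mul, Complex.norm_I, mul_one, Complex.norm_real, Real.norm_eq_abs,
      _root_.abs_of_nonneg hpi.le]
    norm_num
  rw [hn1]
  apply mul_le_mul_of_nonneg_left _ (by positivity)
  rw [circleIntegral]
  have hle := intervalIntegral.norm_integral_le_integral_norm
    (f := fun θ : ℝ => deriv (circleMap 0 1) θ •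
      ((circleMap 0 1 θ - 0) ^ (-2:ℤ) • h (circleMap 0 1 θ)))
    (a := 0) (b := 2*π) (μ := volume) (by positivity)
  refine le_trans hle (le_of_eq ?_)
  apply intervalIntegral.integral_congr
  intro θ _
  have hcm : circleMap 0 1 θ = Complex.exp (θ * Complex.I) := by
    simp [circleMap]
  have hnorm_cm : ‖circleMap 0 1 θ‖ = 1 := by rw [hcm]; exact norm_exp_I θ
  simp only [deriv_circleMap, sub_zero]
  rw [norm_smul, norm_smul, norm_mul, Complex.norm_I, mul_one, hnorm_cm, one_mul,
    norm_zpow, hnorm_cm]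
  simp [hcm, hh]

lemma deriv_comp_mSigma (f : ℂ → ℂ) (hf : DifferentiableOn ℂ f (Metric.ball (0:ℂ) 1))
    {a : ℂ} (ha : ‖a‖ < 1) :
    deriv (fun z => f (mSigma a z)) 0 = deriv f a * ((Complex.normSq a : ℂ) - 1) := by
  have hfa : HasDerivAt f (deriv f a) a :=
    (hf.differentiableAt (Metric.isOpen_ball.mem_nhds
      (by rw [Metric.mem_ball, dist_zero_right]; exact ha))).hasDerivAt
  have hnum : HasDerivAt (fun z : ℂ => a - z) (-1) 0 := by
    simpa using HasDerivAt.const_sub a (hasDerivAt_id' (0:ℂ))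
  have hden : HasDerivAt (fun z : ℂ => 1 - (starRingEnd ℂ) a * z) (-(starRingEnd ℂ) a) 0 := by
    simpa using HasDerivAt.const_sub (1:ℂ)
      ((hasDerivAt_id' (0:ℂ)).const_mul ((starRingEnd ℂ) a))
  have hden0 : (1 : ℂ) - (starRingEnd ℂ) a * 0 ≠ 0 := by simpa using denom_ne ha (by norm_num : ‖(0:ℂ)‖ ≤ 1)
  have hsigma : HasDerivAt (mSigma a) ((Complex.normSq a : ℂ) - 1) 0 := by
    have := hnum.div hden hden0
    have hconj : a * (starRingEnd ℂ) a = (Complex.normSq a : ℂ) := by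
      rw [mul_comm]; exact Complex.normSq_eq_conj_mul_self.symm
    have heq : (-1 * (1 - (starRingEnd ℂ) a * 0) - (a - 0) * -(starRingEnd ℂ) a) /
        (1 - (starRingEnd ℂ) a * 0) ^ 2 = (Complex.normSq a : ℂ) - 1 := by
      simp only [mul_zero, sub_zero, one_pow, div_one]
      linear_combination hconj
    rw [heq] at this
    exact this
  have hcomp := HasDerivAt.comp (0:ℂ)
    (by rw [mSigma_zero] at *; exact hfa) hsigma
  have : deriv (fun z => f (mSigma a z)) 0 = deriv f a * ((Complex.normSq a : ℂ) - 1) :=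
    hcomp.deriv
  exact this

end CampAux

namespace CampAux

open MeasureTheory intervalIntegral

lemma inner_continuous {a : ℂ} (ha : ‖a‖ < 1) :
    Continuous (fun θ : ℝ => mSigma a (Complex.exp (θ * Complex.I))) := by
  have hexp : Continuous (fun θ : ℝ => Complex.exp (θ * Complex.I)) :=
    Complex.continuous_exp.comp (Complex.continuous_ofReal.mul continuous_const)
  apply Continuous.div
  · exact continuous_const.sub hexp
  · exact continuous_const.sub (continuous_const.mul hexp)
  · intro θ
    exact denom_ne ha (le_of_eq (norm_exp_I θ))

lemma F_continuous (f : ℂ → ℂ) (hfc : ContinuousOn f (Metric.closedBall (0:ℂ) 1))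
    {a : ℂ} (ha : ‖a‖ < 1) :
    Continuous (fun θ : ℝ => f (mSigma a (Complex.exp (θ * Complex.I))) - f a) := by
  apply Continuous.sub _ continuous_const
  exact hfc.comp_continuous (inner_continuous ha)
    (fun θ => Metric.mem_closedBall.mpr
      (by rw [dist_zero_right]; exact norm_mSigma_le ha (le_of_eq (norm_exp_I θ))))

lemma bnormSq_nonneg (f : ℂ → ℂ) : 0 ≤ bnormSq f := by
  unfold bnormSq
  apply intervalIntegral.integral_nonneg (by positivity : (0:ℝ) ≤ 2*Real.pi)
  intro θ _
  positivity

lemma g_diffContOnCl (f : ℂ → ℂ) (hf : DifferentiableOn ℂ f (Metric.ball (0:ℂ) 1))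
    (hfc : ContinuousOn f (Metric.closedBall (0:ℂ) 1)) {a : ℂ} (ha : ‖a‖ < 1) :
    DiffContOnCl ℂ (fun z => f (mSigma a z)) (Metric.ball (0:ℂ) 1) := by
  constructor
  · intro z hz
    rw [Metric.mem_ball, dist_zero_right] at hz
    have hσd : DifferentiableAt ℂ (mSigma a) z := by
      apply DifferentiableAt.div
      · exact (differentiableAt_const a).sub differentiableAt_id
      · exact (differentiableAt_const 1).sub (differentiableAt_id.const_mul _)
      · exact denom_ne ha hz.le
    have hfd : DifferentiableAt ℂ f (mSigma a z) :=
      hf.differentiableAt (Metric.isOpen_ball.mem_nhds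
        (by rw [Metric.mem_ball, dist_zero_right]; exact norm_mSigma_lt ha hz))
    exact (hfd.comp z hσd).differentiableWithinAt
  · rw [closure_ball (0:ℂ) one_ne_zero]
    have hσc : ContinuousOn (mSigma a) (Metric.closedBall (0:ℂ) 1) := by
      apply ContinuousOn.div
      · exact continuousOn_const.sub continuousOn_id
      · exact continuousOn_const.sub (continuousOn_const.mul continuousOn_id)
      · intro z hz
        rw [Metric.mem_closedBall, dist_zero_right] at hz
        exact denom_ne ha hz
    apply hfc.comp hσc
    intro z hz
    rw [Metric.mem_closedBall, dist_zero_right] at hz ⊢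
    exact norm_mSigma_le ha hz

lemma norm_deriv_g (f : ℂ → ℂ) (hf : DifferentiableOn ℂ f (Metric.ball (0:ℂ) 1))
    {a : ℂ} (ha : ‖a‖ < 1) :
    ‖deriv (fun z => f (mSigma a z)) 0‖ = (1 - ‖a‖^2) * ‖deriv f a‖ := by
  rw [deriv_comp_mSigma f hf ha, norm_mul]
  have : ((Complex.normSq a : ℂ) - 1) = (((Complex.normSq a - 1 : ℝ)) : ℂ) := by push_cast; ring
  rw [this, Complex.norm_real, Real.norm_eq_abs, normSq_eq_norm_sq,
    abs_of_nonpos (by nlinarith [norm_nonneg a, ha] : ‖a‖^2 - 1 ≤ 0)]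
  ring

end CampAux


open CampAux

/-- For `p ∈ (1,2)`, an analytic `f` belongs to the Campanato space `CA_p`, i.e.
`sup_{a∈D} (1-|a|²)^{(1-p)/2} ‖f∘σ_a − f(a)‖₂ < ∞`, if and only if
`sup_{a∈D} (1-|a|²)^{(3-p)/2} |f'(a)| < ∞` (i.e. `f` lies in the Lipschitz space
`A_{(p-1)/2}`). -/
theorem campanato_iff_lipschitz (p : ℝ) (hp : p ∈ Set.Ioo (1:ℝ) 2) (f : ℂ → ℂ)
    (hf : DifferentiableOn ℂ f (Metric.ball (0:ℂ) 1))
    (hfc : ContinuousOn f (Metric.closedBall (0:ℂ) 1)) :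
    (∃ M : ℝ, ∀ a ∈ Metric.ball (0:ℂ) 1,
        (1 - ‖a‖ ^ 2) ^ ((1 - p) / 2) *
          Real.sqrt (bnormSq fun ξ => f (mSigma a ξ) - f a) ≤ M) ↔
    (∃ M : ℝ, ∀ a ∈ Metric.ball (0:ℂ) 1,
        (1 - ‖a‖ ^ 2) ^ ((3 - p) / 2) * ‖deriv f a‖ ≤ M) := by
  obtain ⟨hp1, hp2⟩ := hp
  have hpi := Real.pi_pos
  constructor
  · rintro ⟨M, hM⟩
    have hM0 : 0 ≤ M := by
      refine le_trans ?_ (hM 0 (Metric.mem_ball_self one_pos))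
      apply mul_nonneg _ (Real.sqrt_nonneg _)
      apply Real.rpow_nonneg
      norm_num
    refine ⟨(2*π + M^2)/(4*π), ?_⟩
    intro a hamem
    have ha : ‖a‖ < 1 := by rwa [Metric.mem_ball, dist_zero_right] at hamem
    have h1a : 0 < 1 - ‖a‖^2 := by nlinarith [norm_nonneg a]
    set ε : ℝ := (1 - ‖a‖^2) ^ ((p-1)/2) with hε_def
    have hε : 0 < ε := Real.rpow_pos_of_pos h1a _
    set Q : ℝ := bnormSq (fun ξ => f (mSigma a ξ) - f a) with hQ_def
    have hQ0 : 0 ≤ Q := bnormSq_nonneg _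
    -- √Q ≤ M ε
    have hsqrtQ : Real.sqrt Q ≤ M * ε := by
      have h1 := hM a hamem
      rw [show (1-p)/2 = -((p-1)/2) by ring, Real.rpow_neg h1a.le] at h1
      rw [← hε_def] at h1
      calc Real.sqrt Q = ε * (ε⁻¹ * Real.sqrt Q) := by field_simp
        _ ≤ ε * M := mul_le_mul_of_nonneg_left h1 hε.le
        _ = M * ε := by ring
    have hQle : Q ≤ M^2 * ε^2 := by
      have := Real.sq_sqrt hQ0
      nlinarith [Real.sqrt_nonneg Q]
    -- Cauchy estimate
    set g : ℂ → ℂ := fun z => f (mSigma a z) with hg_def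
    have hgd := deriv_bound g (g_diffContOnCl f hf hfc ha)
    have hg0 : g 0 = f a := by rw [hg_def]; simp [mSigma_zero]
    have hgnorm : ‖deriv g 0‖ = (1 - ‖a‖^2) * ‖deriv f a‖ := norm_deriv_g f hf ha
    -- AM-GM integral bound
    have hFc := F_continuous f hfc ha
    have hIbound : (∫ θ in (0:ℝ)..(2*π), ‖g (Complex.exp (θ*Complex.I)) - g 0‖)
        ≤ π * ε + (2*ε)⁻¹ * Q := by
      have hint1 : IntervalIntegrable
          (fun θ : ℝ => ‖g (Complex.exp (θ*Complex.I)) - g 0‖) MeasureTheory.volume 0 (2*π) := by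
        apply Continuous.intervalIntegrable
        simp only [hg_def, mSigma_zero]
        exact hFc.norm
      have hint2 : IntervalIntegrable
          (fun θ : ℝ => ε/2 + (2*ε)⁻¹ * ‖g (Complex.exp (θ*Complex.I)) - g 0‖^2)
          MeasureTheory.volume 0 (2*π) := by
        apply Continuous.intervalIntegrable
        apply continuous_const.add
        apply continuous_const.mul
        simp only [hg_def, mSigma_zero]
        exact hFc.norm.pow 2
      have hmono := intervalIntegral.integral_mono_on (by positivity : (0:ℝ) ≤ 2*π)
        hint1 hint2 (fun θ _ => by
          set x : ℝ := ‖g (Complex.exp (θ*Complex.I)) - g 0‖ with hx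
          have hx0 : 0 ≤ x := norm_nonneg _
          have : 0 ≤ (x - ε)^2 := sq_nonneg _
          rw [show ε/2 + (2*ε)⁻¹ * x^2 = (ε^2 + x^2)/(2*ε) by field_simp]
          rw [le_div_iff₀ (by positivity)]
          nlinarith)
      refine le_trans hmono (le_of_eq ?_)
      rw [intervalIntegral.integral_add intervalIntegrable_const
        (by
          apply Continuous.intervalIntegrable
          apply continuous_const.mul
          simp only [hg_def, mSigma_zero]
          exact hFc.norm.pow 2),
        intervalIntegral.integral_const, intervalIntegral.integral_const_mul]
      have hQeq : (∫ θ in (0:ℝ)..(2*π), ‖g (Complex.exp (θ*Complex.I)) - g 0‖^2) = Q := by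
        rw [hQ_def]
        unfold bnormSq
        apply intervalIntegral.integral_congr
        intro θ _
        simp only [hg_def, mSigma_zero]
      rw [hQeq]
      simp
      ring
    -- combine
    have hkey : (1 - ‖a‖^2) * ‖deriv f a‖ ≤ (2*π)⁻¹ * (π * ε + (2*ε)⁻¹ * Q) := by
      rw [← hgnorm]
      refine le_trans hgd ?_
      apply mul_le_mul_of_nonneg_left hIbound (by positivity)
    have hexp_split : (1 - ‖a‖^2) ^ ((3-p)/2) = ε⁻¹ * (1 - ‖a‖^2) := by
      have h1 : (1 - ‖a‖^2) ^ ((3-p)/2) = (1-‖a‖^2) ^ (-((p-1)/2)) * (1-‖a‖^2) := by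
        rw [← Real.rpow_add_one (ne_of_gt h1a), show -((p-1)/2) + 1 = (3-p)/2 by ring]
      rw [h1, Real.rpow_neg h1a.le, ← hε_def]
    rw [hexp_split]
    calc ε⁻¹ * (1 - ‖a‖^2) * ‖deriv f a‖
        ≤ ε⁻¹ * ((2*π)⁻¹ * (π * ε + (2*ε)⁻¹ * Q)) := by
          rw [mul_assoc]
          exact mul_le_mul_of_nonneg_left hkey (by positivity)
      _ ≤ ε⁻¹ * ((2*π)⁻¹ * (π * ε + (2*ε)⁻¹ * (M^2 * ε^2))) := by
          apply mul_le_mul_of_nonneg_left _ (by positivity)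
          apply mul_le_mul_of_nonneg_left _ (by positivity)
          apply add_le_add (le_refl _)
          exact mul_le_mul_of_nonneg_left hQle (by positivity)
      _ = (2*π + M^2)/(4*π) := by field_simp; ring
  · rintro ⟨M, hM⟩
    have hM0 : 0 ≤ M := by
      refine le_trans ?_ (hM 0 (Metric.mem_ball_self one_pos))
      apply mul_nonneg _ (norm_nonneg _)
      apply Real.rpow_nonneg
      norm_num
    set β : ℝ := (p-1)/2 with hβ_def
    have hβ0 : 0 < β := by rw [hβ_def]; linarith
    have hβ1 : β < 1 := by rw [hβ_def]; linarith
    -- derivative bound in Hardy–Littlewood form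
    have hMd : ∀ a ∈ Metric.ball (0:ℂ) 1, ‖deriv f a‖ ≤ M * (1 - ‖a‖) ^ (β-1) := by
      intro a hamem
      have ha : ‖a‖ < 1 := by rwa [Metric.mem_ball, dist_zero_right] at hamem
      have h1a : 0 < 1 - ‖a‖^2 := by nlinarith [norm_nonneg a]
      have h1a' : 0 < 1 - ‖a‖ := by linarith
      have hle : 1 - ‖a‖ ≤ 1 - ‖a‖^2 := by nlinarith [norm_nonneg a]
      have h1 := hM a hamem
      have hpow_pos : 0 < (1 - ‖a‖^2) ^ ((3-p)/2) := Real.rpow_pos_of_pos h1a _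
      have h2 : ‖deriv f a‖ ≤ M * (1 - ‖a‖^2) ^ (β-1) := by
        have h3 : ‖deriv f a‖ ≤ M / (1 - ‖a‖^2) ^ ((3-p)/2) := by
          rw [le_div_iff₀ hpow_pos]
          calc ‖deriv f a‖ * (1 - ‖a‖^2) ^ ((3-p)/2)
              = (1 - ‖a‖^2) ^ ((3-p)/2) * ‖deriv f a‖ := by ring
            _ ≤ M := h1
        have h4 : M / (1 - ‖a‖^2) ^ ((3-p)/2) = M * (1 - ‖a‖^2) ^ (β-1) := by
          rw [show β - 1 = -((3-p)/2) by rw [hβ_def]; ring, Real.rpow_neg h1a.le]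
          ring
        rwa [h4] at h3
      refine le_trans h2 ?_
      apply mul_le_mul_of_nonneg_left _ hM0
      exact Real.rpow_le_rpow_of_nonpos h1a' hle (by linarith)
    obtain ⟨C, hC0, hC⟩ := hoelder f hf hfc hβ0 hβ1 hM0 hMd
    obtain ⟨K, hK0, hK⟩ := kernel_bound (q := p-1) (by linarith) (by linarith)
    refine ⟨C * Real.sqrt K, ?_⟩
    intro a hamem
    have ha : ‖a‖ < 1 := by rwa [Metric.mem_ball, dist_zero_right] at hamem
    have h1a : 0 < 1 - ‖a‖^2 := by nlinarith [norm_nonneg a]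
    set Q : ℝ := bnormSq (fun ξ => f (mSigma a ξ) - f a) with hQ_def
    have hFc := F_continuous f hfc ha
    have hker_cont : Continuous
        (fun θ : ℝ => ‖1 - (starRingEnd ℂ) a * Complex.exp (θ*Complex.I)‖ ^ (-(p-1))) := by
      apply Continuous.rpow_const
      · exact (continuous_const.sub (continuous_const.mul
          (Complex.continuous_exp.comp (Complex.continuous_ofReal.mul continuous_const)))).norm
      · intro θ
        left
        exact ne_of_gt (denom_norm_pos ha (le_of_eq (norm_exp_I θ)))
    have hQle : Q ≤ C^2 * (1 - ‖a‖^2)^(p-1) * K := by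
      have hptwise : ∀ θ ∈ Set.Icc (0:ℝ) (2*π),
          ‖f (mSigma a (Complex.exp (θ*Complex.I))) - f a‖ ^ 2
            ≤ C^2 * (1 - ‖a‖^2)^(p-1) *
              ‖1 - (starRingEnd ℂ) a * Complex.exp (θ*Complex.I)‖ ^ (-(p-1)) := by
        intro θ _
        have hξ : ‖Complex.exp (θ*Complex.I)‖ = 1 := norm_exp_I θ
        have hσmem : mSigma a (Complex.exp (θ*Complex.I)) ∈ Metric.closedBall (0:ℂ) 1 :=
          Metric.mem_closedBall.mpr (by
            rw [dist_zero_right]; exact norm_mSigma_le ha hξ.le)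
        have hamem' : a ∈ Metric.closedBall (0:ℂ) 1 :=
          Metric.mem_closedBall.mpr (by rw [dist_zero_right]; exact ha.le)
        have h1 := hC _ hσmem _ hamem'
        have hnorm := norm_mSigma_sub ha hξ
        set t : ℝ := ‖mSigma a (Complex.exp (θ*Complex.I)) - a‖ with ht_def
        have ht0 : 0 ≤ t := norm_nonneg _
        have h2 : ‖f (mSigma a (Complex.exp (θ*Complex.I))) - f a‖ ^ 2 ≤ (C * t ^ β)^2 := by
          apply pow_le_pow_left₀ (norm_nonneg _) h1
        refine le_trans h2 (le_of_eq ?_)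
        have h3 : (C * t ^ β)^2 = C^2 * (t^β)^2 := by ring
        have h4 : (t^β)^2 = t^(p-1) := by
          rw [← Real.rpow_natCast (t^β) 2, ← Real.rpow_mul ht0]
          congr 1
          rw [hβ_def]
          push_cast
          ring
        have h5 : t^(p-1) = (1 - ‖a‖^2)^(p-1) *
            ‖1 - (starRingEnd ℂ) a * Complex.exp (θ*Complex.I)‖ ^ (-(p-1)) := by
          rw [hnorm, Real.div_rpow h1a.le (norm_nonneg _), div_eq_mul_inv,
            ← Real.rpow_neg (norm_nonneg _)]
        rw [h3, h4, h5, mul_assoc]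
      have hint1 : IntervalIntegrable
          (fun θ : ℝ => ‖f (mSigma a (Complex.exp (θ*Complex.I))) - f a‖ ^ 2)
          MeasureTheory.volume 0 (2*π) := (hFc.norm.pow 2).intervalIntegrable _ _
      have hint2 : IntervalIntegrable
          (fun θ : ℝ => C^2 * (1 - ‖a‖^2)^(p-1) *
            ‖1 - (starRingEnd ℂ) a * Complex.exp (θ*Complex.I)‖ ^ (-(p-1)))
          MeasureTheory.volume 0 (2*π) := (continuous_const.mul hker_cont).intervalIntegrable _ _
      have hmono := intervalIntegral.integral_mono_on (by positivity : (0:ℝ) ≤ 2*π)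
        hint1 hint2 hptwise
      have hQeq : Q = ∫ θ in (0:ℝ)..(2*π),
          ‖f (mSigma a (Complex.exp (θ*Complex.I))) - f a‖ ^ 2 := by
        rw [hQ_def]; unfold bnormSq; rfl
      rw [hQeq]
      refine le_trans hmono ?_
      rw [intervalIntegral.integral_const_mul]
      have hKa := hK ((starRingEnd ℂ) a) (by rwa [RCLike.norm_conj])
      apply mul_le_mul_of_nonneg_left hKa (by positivity)
    -- take square roots
    have hQ0 : 0 ≤ Q := bnormSq_nonneg _
    have hsqrt : Real.sqrt Q ≤ C * (1 - ‖a‖^2)^β * Real.sqrt K := by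
      refine le_trans (Real.sqrt_le_sqrt hQle) (le_of_eq ?_)
      rw [Real.sqrt_mul (by positivity) K, Real.sqrt_mul (by positivity : (0:ℝ) ≤ C^2)]
      congr 2
      · exact Real.sqrt_sq hC0
      · rw [show (1 - ‖a‖^2)^(p-1) = ((1 - ‖a‖^2)^β)^2 by
            rw [← Real.rpow_natCast ((1 - ‖a‖^2)^β) 2, ← Real.rpow_mul h1a.le]
            congr 1
            rw [hβ_def]; push_cast; ring]
        exact Real.sqrt_sq (Real.rpow_nonneg h1a.le _)
    calc (1 - ‖a‖^2) ^ ((1-p)/2) * Real.sqrt Q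
        ≤ (1 - ‖a‖^2) ^ ((1-p)/2) * (C * (1 - ‖a‖^2)^β * Real.sqrt K) := by
          exact mul_le_mul_of_nonneg_left hsqrt (Real.rpow_nonneg h1a.le _)
      _ = C * Real.sqrt K * ((1 - ‖a‖^2) ^ ((1-p)/2) * (1 - ‖a‖^2)^β) := by ring
      _ = C * Real.sqrt K := by
          rw [← Real.rpow_add h1a, show (1-p)/2 + β = 0 by rw [hβ_def]; ring,
            Real.rpow_zero, mul_one]
end

section
/- Uniform boundedness of test functions: for p ∈ [0,2) and b ∈ D, let f_b(z) = (1-|b|^2)^{(1+p)/2}/(1-conj(b)z). Then sup_{b∈D} ‖f_b‖_{CA_p,*} < ∞, where ‖f‖_{CA_p,*} = sup_{a∈D} (1-|a|^2)^{(1-p)/2} ‖f∘σ_a − f(a)‖_2. -/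
/-- The test function `f_b(z) = (1-|b|²)^{(1+p)/2}/(1 - conj(b) z)`. -/
noncomputable def testFun (p : ℝ) (b z : ℂ) : ℂ :=
  (((1 - ‖b‖ ^ 2) ^ ((1 + p) / 2) : ℝ) : ℂ) / (1 - (starRingEnd ℂ) b * z)

open Complex intervalIntegral
open Complex intervalIntegral

lemma poisson_complex {w : ℂ} (hw : ‖w‖ < 1) :
    ∫ θ in (0:ℝ)..(2 * Real.pi),
      (1 + w * Complex.exp (θ * Complex.I)) / (1 - w * Complex.exp (θ * Complex.I))
      = 2 * Real.pi := by
  have hnz : ∀ θ : ℝ, ‖w * Complex.exp (θ * Complex.I)‖ < 1 := by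
    intro θ
    simp only [norm_mul, Complex.norm_exp_ofReal_mul_I, mul_one]
    exact hw
  have hre : ∀ θ : ℝ, 0 < (1 - w * Complex.exp (θ * Complex.I)).re := by
    intro θ
    have h1 := Complex.re_le_norm (w * Complex.exp (θ * Complex.I))
    have h2 := hnz θ
    simp only [Complex.sub_re, Complex.one_re]
    linarith
  have hne : ∀ θ : ℝ, (1 : ℂ) - w * Complex.exp (θ * Complex.I) ≠ 0 := by
    intro θ h
    have := hre θ
    rw [h] at this; simp at this
  have hderiv : ∀ θ : ℝ,
      HasDerivAt (fun t : ℝ => (t : ℂ) + 2 * Complex.I *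
          Complex.log (1 - w * Complex.exp (t * Complex.I)))
        ((1 + w * Complex.exp (θ * Complex.I)) / (1 - w * Complex.exp (θ * Complex.I))) θ := by
    intro θ
    have hexp : HasDerivAt (fun t : ℝ => Complex.exp (t * Complex.I))
        (Complex.exp (θ * Complex.I) * Complex.I) θ := by
      have h0 : HasDerivAt (fun t : ℝ => (t : ℂ) * Complex.I) Complex.I θ := by
        simpa using (Complex.ofRealCLM.hasDerivAt (x := θ)).mul_const Complex.I
      simpa using h0.cexp
    have hg : HasDerivAt (fun t : ℝ => (1 : ℂ) - w * Complex.exp (t * Complex.I))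
        (-(w * (Complex.exp (θ * Complex.I) * Complex.I))) θ :=
      (hexp.const_mul w).const_sub 1
    have hmem : (1 : ℂ) - w * Complex.exp (θ * Complex.I) ∈ Complex.slitPlane :=
      Or.inl (hre θ)
    have hlog := (hg.clog_real hmem).const_mul (2 * Complex.I)
    have hid : HasDerivAt (fun t : ℝ => (t : ℂ)) 1 θ := by
      simpa using (hasDerivAt_id θ).ofReal_comp
    have := hid.add hlog
    refine this.congr_deriv ?_
    have h := hne θ
    rw [eq_div_iff h, add_mul, mul_assoc (2 * Complex.I), div_mul_cancel₀ _ h]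
    linear_combination (-2 * w * Complex.exp (↑θ * Complex.I)) * Complex.I_sq
  have hint : IntervalIntegrable (fun θ : ℝ =>
      (1 + w * Complex.exp (θ * Complex.I)) / (1 - w * Complex.exp (θ * Complex.I)))
      MeasureTheory.volume 0 (2 * Real.pi) := by
    apply Continuous.intervalIntegrable
    apply Continuous.div
    · continuity
    · continuity
    · exact hne
  have := integral_eq_sub_of_hasDerivAt (fun θ _ => hderiv θ) hint
  rw [this]
  have h2pi : Complex.exp ((2 * Real.pi : ℝ) * Complex.I) = 1 := by
    push_cast
    exact Complex.exp_two_pi_mul_I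
  simp [h2pi]

lemma re_poisson (z : ℂ) (h : (1:ℂ) - z ≠ 0) :
    ((1 + z) / (1 - z)).re = (1 - ‖z‖^2) / ‖1 - z‖^2 := by
  rw [Complex.div_re]
  have hn : Complex.normSq (1 - z) = ‖1 - z‖^2 := by
    rw [Complex.sq_norm]
  have hz : ‖z‖^2 = z.re^2 + z.im^2 := by
    rw [Complex.sq_norm, Complex.normSq_apply]; ring
  rw [hn]
  congr 1
  simp only [Complex.add_re, Complex.sub_re, Complex.add_im, Complex.sub_im, Complex.one_re,
    Complex.one_im, hz]
  ring

lemma poisson_real {w : ℂ} (hw : ‖w‖ < 1) :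
    ∫ θ in (0:ℝ)..(2 * Real.pi), (1:ℝ) / ‖1 - w * Complex.exp (θ * Complex.I)‖ ^ 2
      = 2 * Real.pi / (1 - ‖w‖ ^ 2) := by
  have hnorm : ∀ θ : ℝ, ‖w * Complex.exp (θ * Complex.I)‖ = ‖w‖ := by
    intro θ
    simp [norm_mul, Complex.norm_exp_ofReal_mul_I]
  have hre' : ∀ θ : ℝ, 0 < (1 - w * Complex.exp (θ * Complex.I)).re := by
    intro θ
    have h1 := Complex.re_le_norm (w * Complex.exp (θ * Complex.I))
    have h2 : ‖w * Complex.exp (θ * Complex.I)‖ < 1 := by rw [hnorm]; exact hw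
    simp only [Complex.sub_re, Complex.one_re]
    linarith
  have hne : ∀ θ : ℝ, (1 : ℂ) - w * Complex.exp (θ * Complex.I) ≠ 0 := by
    intro θ h
    have := hre' θ; rw [h] at this; simp at this
  have hint : IntervalIntegrable (fun θ : ℝ =>
      (1 + w * Complex.exp (θ * Complex.I)) / (1 - w * Complex.exp (θ * Complex.I)))
      MeasureTheory.volume 0 (2 * Real.pi) := by
    apply Continuous.intervalIntegrable
    exact Continuous.div (by continuity) (by continuity) hne
  have hC : ∫ θ in (0:ℝ)..(2 * Real.pi),
      (1 + w * Complex.exp (θ * Complex.I)) / (1 - w * Complex.exp (θ * Complex.I))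
      = 2 * Real.pi := poisson_complex hw
  have hRe : ∫ θ in (0:ℝ)..(2 * Real.pi),
      ((1 + w * Complex.exp (θ * Complex.I)) / (1 - w * Complex.exp (θ * Complex.I))).re
      = 2 * Real.pi := by
    have := Complex.reCLM.intervalIntegral_comp_comm hint
    simp only [Complex.reCLM_apply] at this
    rw [this, hC]
    simp
  have hptw : ∀ θ : ℝ,
      ((1 + w * Complex.exp (θ * Complex.I)) / (1 - w * Complex.exp (θ * Complex.I))).re
      = (1 - ‖w‖^2) * ((1:ℝ) / ‖1 - w * Complex.exp (θ * Complex.I)‖ ^ 2) := by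
    intro θ
    rw [re_poisson _ (hne θ), hnorm θ]
    ring
  rw [intervalIntegral.integral_congr (fun θ _ => hptw θ), intervalIntegral.integral_const_mul] at hRe
  have hpos : 0 < 1 - ‖w‖^2 := by nlinarith [norm_nonneg w]
  rw [eq_div_iff (ne_of_gt hpos)]
  linarith

lemma norm_identity (a b : ℂ) :
    ‖1 - (starRingEnd ℂ) b * a‖^2 - ‖a - b‖^2 = (1 - ‖a‖^2) * (1 - ‖b‖^2) := by
  have h : ∀ z : ℂ, ‖z‖^2 = Complex.normSq z := fun z => by
    rw [Complex.sq_norm]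
  simp only [h, Complex.normSq_apply, Complex.sub_re, Complex.sub_im, Complex.mul_re,
    Complex.mul_im, Complex.one_re, Complex.one_im, Complex.conj_re, Complex.conj_im]
  ring

lemma alg_identity (c A B a ξ s : ℂ) (h1 : 1 - A * ξ ≠ 0) (h2 : 1 - B * a ≠ 0)
    (h3 : 1 - B * a - (A - B) * ξ ≠ 0) (hs : s = 1 - A * a) :
    c / (1 - B * ((a - ξ) / (1 - A * ξ))) - c / (1 - B * a)
      = -(c * ξ * B * s) / ((1 - B * a) * ((1 - B * a) - (A - B) * ξ)) := by
  have h4 : (1 : ℂ) - B * ((a - ξ) / (1 - A * ξ)) = ((1 - B * a) - (A - B) * ξ) / (1 - A * ξ) := by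
    rw [eq_div_iff h1, sub_mul, one_mul, mul_assoc B, div_mul_cancel₀ _ h1]; ring
  rw [h4, div_div_eq_mul_div, hs]
  rw [div_sub_div _ _ h3 h2, div_eq_div_iff (mul_ne_zero h3 h2) (mul_ne_zero h2 h3)]
  ring

lemma norm_conj' (z : ℂ) : ‖(starRingEnd ℂ) z‖ = ‖z‖ := by
  exact Complex.norm_conj z

lemma diff_formula (p : ℝ) (a b ξ : ℂ) (ha : ‖a‖ < 1) (hb : ‖b‖ < 1) (hξ : ‖ξ‖ = 1) :
    testFun p b (mSigma a ξ) - testFun p b a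
      = -((((1 - ‖b‖ ^ 2) ^ ((1 + p) / 2) : ℝ) : ℂ) * ξ * (starRingEnd ℂ) b *
          (((1 - ‖a‖^2 : ℝ)) : ℂ)) /
        ((1 - (starRingEnd ℂ) b * a) *
          ((1 - (starRingEnd ℂ) b * a) - ((starRingEnd ℂ) a - (starRingEnd ℂ) b) * ξ)) := by
  have h1 : (1 : ℂ) - (starRingEnd ℂ) a * ξ ≠ 0 := by
    intro h
    have hlt : ‖(starRingEnd ℂ) a * ξ‖ < 1 := by
      rw [norm_mul, hξ, mul_one, norm_conj']
      exact ha
    have h2 : (1:ℂ) = (starRingEnd ℂ) a * ξ := by linear_combination h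
    rw [← h2] at hlt; simp at hlt
  have h2 : (1 : ℂ) - (starRingEnd ℂ) b * a ≠ 0 := by
    intro h
    have hlt : ‖(starRingEnd ℂ) b * a‖ < 1 := by
      rw [norm_mul, norm_conj']
      nlinarith [norm_nonneg a, norm_nonneg b]
    have h2 : (1:ℂ) = (starRingEnd ℂ) b * a := by linear_combination h
    rw [← h2] at hlt; simp at hlt
  have hid : ‖1 - (starRingEnd ℂ) b * a‖^2 - ‖a - b‖^2 = (1 - ‖a‖^2) * (1 - ‖b‖^2) :=
    norm_identity a b
  have hsq : ‖a - b‖^2 < ‖1 - (starRingEnd ℂ) b * a‖^2 := by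
    have hpa : (0:ℝ) < 1 - ‖a‖^2 := by nlinarith [norm_nonneg a]
    have hpb : (0:ℝ) < 1 - ‖b‖^2 := by nlinarith [norm_nonneg b]
    nlinarith [mul_pos hpa hpb]
  have hβα : ‖(starRingEnd ℂ) a - (starRingEnd ℂ) b‖ < ‖1 - (starRingEnd ℂ) b * a‖ := by
    have hAB : ‖(starRingEnd ℂ) a - (starRingEnd ℂ) b‖ = ‖a - b‖ := by
      rw [← map_sub, norm_conj']
    rw [hAB]
    nlinarith [norm_nonneg (a - b), norm_nonneg (1 - (starRingEnd ℂ) b * a)]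
  have h3 : 1 - (starRingEnd ℂ) b * a - ((starRingEnd ℂ) a - (starRingEnd ℂ) b) * ξ ≠ 0 := by
    intro h
    have he : (1 : ℂ) - (starRingEnd ℂ) b * a = ((starRingEnd ℂ) a - (starRingEnd ℂ) b) * ξ := by
      linear_combination h
    have : ‖(1 : ℂ) - (starRingEnd ℂ) b * a‖ = ‖(starRingEnd ℂ) a - (starRingEnd ℂ) b‖ := by
      rw [he, norm_mul, hξ, mul_one]
    linarith
  have hs : ((1 - ‖a‖^2 : ℝ) : ℂ) = 1 - (starRingEnd ℂ) a * a := by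
    have : (starRingEnd ℂ) a * a = ((‖a‖^2 : ℝ) : ℂ) := by
      rw [mul_comm]
      exact_mod_cast Complex.mul_conj' a
    rw [this]
    push_cast
    ring
  simp only [testFun, mSigma]
  exact alg_identity _ _ _ _ _ _ h1 h2 h3 hs

lemma rpow_sq_helper {x : ℝ} (hx : 0 ≤ x) (r : ℝ) : (x ^ r) ^ 2 = x ^ (2 * r) := by
  rw [← Real.rpow_natCast (x ^ r) 2, ← Real.rpow_mul hx]
  norm_num
  ring_nf

set_option maxHeartbeats 1000000 in
/-- Uniform boundedness of the test functions: for `p ∈ [0,2)`,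
`sup_{b∈D} ‖f_b‖_{CA_p,*} < ∞`, where
`‖f‖_{CA_p,*} = sup_{a∈D} (1-|a|²)^{(1-p)/2} ‖f∘σ_a − f(a)‖₂`. -/
theorem testFun_uniformly_bounded (p : ℝ) (hp : p ∈ Set.Ico (0:ℝ) 2) :
    ∃ C : ℝ, ∀ b ∈ Metric.ball (0:ℂ) 1, ∀ a ∈ Metric.ball (0:ℂ) 1,
      (1 - ‖a‖ ^ 2) ^ ((1 - p) / 2) *
        Real.sqrt (bnormSq fun ξ => testFun p b (mSigma a ξ) - testFun p b a) ≤ C := by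
  obtain ⟨hp0, hp2⟩ := hp
  refine ⟨2 * Real.sqrt (2 * Real.pi), ?_⟩
  intro b hb a ha
  rw [Metric.mem_ball, dist_zero_right] at ha hb
  set x : ℝ := 1 - ‖a‖ ^ 2 with hxdef
  set y : ℝ := 1 - ‖b‖ ^ 2 with hydef
  have hx : 0 < x := by nlinarith [norm_nonneg a]
  have hy : 0 < y := by nlinarith [norm_nonneg b]
  set c : ℝ := y ^ ((1 + p) / 2) with hcdef
  have hc0 : 0 ≤ c := Real.rpow_nonneg hy.le _
  set α : ℂ := 1 - (starRingEnd ℂ) b * a with hαdef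
  set β : ℂ := (starRingEnd ℂ) a - (starRingEnd ℂ) b with hβdef
  have hid : ‖α‖^2 - ‖a - b‖^2 = x * y := norm_identity a b
  have hαlb : 1 - ‖a‖ * ‖b‖ ≤ ‖α‖ := by
    have h1 := norm_sub_norm_le (1 : ℂ) ((starRingEnd ℂ) b * a)
    rw [norm_mul, norm_conj', norm_one] at h1
    calc 1 - ‖a‖ * ‖b‖ = 1 - ‖b‖ * ‖a‖ := by ring
    _ ≤ ‖α‖ := h1
  have hαpos : 0 < ‖α‖ := by nlinarith [norm_nonneg a, norm_nonneg b]
  have hβα : ‖β‖ < ‖α‖ := by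
    have hAB : ‖β‖ = ‖a - b‖ := by rw [hβdef, ← map_sub, norm_conj']
    rw [hAB]
    nlinarith [norm_nonneg (a - b), mul_pos hx hy]
  set w : ℂ := β / α with hwdef
  have hαne : α ≠ 0 := by intro h; rw [h] at hαpos; simp at hαpos
  have hw : ‖w‖ < 1 := by
    rw [hwdef, norm_div, div_lt_one hαpos]
    exact hβα
  have h1mw : 1 - ‖w‖ ^ 2 = x * y / ‖α‖ ^ 2 := by
    have hAB : ‖β‖ = ‖a - b‖ := by rw [hβdef, ← map_sub, norm_conj']
    have hwsq : ‖w‖ ^ 2 = ‖a - b‖ ^ 2 / ‖α‖ ^ 2 := by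
      rw [hwdef, norm_div, div_pow, hAB]
    rw [hwsq, eq_div_iff (ne_of_gt (pow_pos hαpos 2)), sub_mul,
      div_mul_cancel₀ _ (ne_of_gt (pow_pos hαpos 2)), one_mul]
    exact hid
  set K : ℝ := c ^ 2 * ‖b‖ ^ 2 * x ^ 2 / (‖α‖ ^ 2 * ‖α‖ ^ 2) with hKdef
  have hξn : ∀ θ : ℝ, ‖Complex.exp (θ * Complex.I)‖ = 1 := by
    intro θ; simp [Complex.norm_exp_ofReal_mul_I]
  have hpt : ∀ θ : ℝ,
      ‖testFun p b (mSigma a (Complex.exp (θ * Complex.I))) - testFun p b a‖ ^ 2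
        = K * ((1:ℝ) / ‖1 - w * Complex.exp (θ * Complex.I)‖ ^ 2) := by
    intro θ
    set ξ : ℂ := Complex.exp (θ * Complex.I) with hξdef
    rw [diff_formula p a b ξ ha hb (hξn θ)]
    have hfact : (1 - (starRingEnd ℂ) b * a) - ((starRingEnd ℂ) a - (starRingEnd ℂ) b) * ξ
        = α * (1 - w * ξ) := by
      rw [hwdef]
      field_simp
      rw [hαdef, hβdef]; ring
    rw [hfact]
    have h1w : ‖1 - w * ξ‖ ≠ 0 := by
      have : ‖w * ξ‖ < 1 := by rw [norm_mul, hξn θ, mul_one]; exact hw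
      intro h
      rw [norm_eq_zero, sub_eq_zero] at h
      rw [← h] at this
      simp at this
    rw [norm_div, norm_neg, norm_mul, norm_mul, norm_mul, norm_mul, norm_conj', hξn θ]
    rw [Complex.norm_of_nonneg hc0]
    rw [Complex.norm_of_nonneg hx.le]
    rw [hKdef]
    rw [← hαdef, norm_mul]
    have hαn : ‖α‖ ≠ 0 := hαpos.ne'
    field_simp
  have hbn : bnormSq (fun ξ => testFun p b (mSigma a ξ) - testFun p b a)
      = K * (2 * Real.pi / (1 - ‖w‖ ^ 2)) := by
    rw [bnormSq]
    rw [intervalIntegral.integral_congr (g := fun θ : ℝ =>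
      K * ((1:ℝ) / ‖1 - w * Complex.exp (θ * Complex.I)‖ ^ 2)) (fun θ _ => hpt θ)]
    rw [intervalIntegral.integral_const_mul, poisson_real hw]
  -- compute bnormSq in closed form
  have hS : bnormSq (fun ξ => testFun p b (mSigma a ξ) - testFun p b a)
      = 2 * Real.pi * ‖b‖ ^ 2 * y ^ p * x / ‖α‖ ^ 2 := by
    rw [hbn, h1mw, hKdef]
    have hc2 : c ^ 2 = y ^ p * y := by
      rw [hcdef, rpow_sq_helper hy.le]
      have h2 : 2 * ((1 + p) / 2) = p + 1 := by ring
      rw [h2, Real.rpow_add hy, Real.rpow_one]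
    rw [hc2, div_div_eq_mul_div, div_mul_div_comm,
      div_eq_div_iff (by positivity) (by positivity)]
    ring
  rw [hS]
  have hq0 : 0 ≤ 2 * Real.pi * ‖b‖ ^ 2 * y ^ p * x / ‖α‖ ^ 2 := by positivity
  have hT2 : (x ^ ((1 - p) / 2) * Real.sqrt (2 * Real.pi * ‖b‖ ^ 2 * y ^ p * x / ‖α‖ ^ 2)) ^ 2
      = x ^ (1 - p) * (2 * Real.pi * ‖b‖ ^ 2 * y ^ p * x / ‖α‖ ^ 2) := by
    rw [mul_pow, Real.sq_sqrt hq0, rpow_sq_helper hx.le]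
    congr 2
    ring
  have hxα : x ≤ 2 * ‖α‖ := by
    nlinarith [hαlb, sq_nonneg (1 - ‖a‖), mul_nonneg (norm_nonneg a) (sub_nonneg.mpr hb.le),
      norm_nonneg a, norm_nonneg b]
  have hyα : y ≤ 2 * ‖α‖ := by
    nlinarith [hαlb, sq_nonneg (1 - ‖b‖), mul_nonneg (norm_nonneg b) (sub_nonneg.mpr ha.le),
      norm_nonneg a, norm_nonneg b]
  have hkey : x ^ (2 - p) * y ^ p ≤ 4 * ‖α‖ ^ 2 := by
    have h1 : x ^ (2 - p) ≤ (2 * ‖α‖) ^ (2 - p) :=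
      Real.rpow_le_rpow hx.le hxα (by linarith)
    have h2 : y ^ p ≤ (2 * ‖α‖) ^ p := Real.rpow_le_rpow hy.le hyα hp0
    have h3 : x ^ (2 - p) * y ^ p ≤ (2 * ‖α‖) ^ (2 - p) * ((2 * ‖α‖) ^ p) :=
      mul_le_mul h1 h2 (Real.rpow_nonneg hy.le p) (Real.rpow_nonneg (by positivity) _)
    have h4 : (2 * ‖α‖) ^ (2 - p) * ((2 * ‖α‖) ^ p) = 4 * ‖α‖ ^ 2 := by
      rw [← Real.rpow_add (by positivity)]
      have h5 : (2 - p) + p = ((2:ℕ):ℝ) := by norm_num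
      rw [h5, Real.rpow_natCast]
      ring
    linarith
  have hfinal : x ^ (1 - p) * (2 * Real.pi * ‖b‖ ^ 2 * y ^ p * x / ‖α‖ ^ 2) ≤ 8 * Real.pi := by
    rw [← mul_div_assoc, div_le_iff₀ (pow_pos hαpos 2)]
    have hx1 : x ^ (1 - p) * x = x ^ (2 - p) := by
      nth_rewrite 2 [← Real.rpow_one x]
      rw [← Real.rpow_add hx]
      congr 1
      ring
    have e1 : x ^ (1 - p) * (2 * Real.pi * ‖b‖ ^ 2 * y ^ p * x)
        = 2 * Real.pi * ‖b‖ ^ 2 * (x ^ (1 - p) * x * y ^ p) := by ring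
    rw [e1, hx1]
    have hb2 : ‖b‖ ^ 2 ≤ 1 := by nlinarith [norm_nonneg b]
    have hP0 : 0 ≤ x ^ (2 - p) * y ^ p :=
      mul_nonneg (Real.rpow_nonneg hx.le _) (Real.rpow_nonneg hy.le _)
    nlinarith [mul_le_mul_of_nonneg_left hkey Real.pi_pos.le,
      mul_nonneg hP0 (sub_nonneg.mpr hb2), Real.pi_pos]
  have hL0 : 0 ≤ x ^ ((1 - p) / 2) *
      Real.sqrt (2 * Real.pi * ‖b‖ ^ 2 * y ^ p * x / ‖α‖ ^ 2) := by positivity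
  have h5 : (x ^ ((1 - p) / 2) *
      Real.sqrt (2 * Real.pi * ‖b‖ ^ 2 * y ^ p * x / ‖α‖ ^ 2)) ^ 2 ≤ 8 * Real.pi := by
    rw [hT2]; exact hfinal
  have h6 := Real.sqrt_le_sqrt h5
  rw [Real.sqrt_sq hL0] at h6
  refine h6.trans (le_of_eq ?_)
  rw [show (8:ℝ) * Real.pi = 2 ^ 2 * (2 * Real.pi) by ring,
    Real.sqrt_mul (by positivity), Real.sqrt_sq (by norm_num)]
end

section
/- Composition bound in H^2: if g, ψ are analytic on D with g(0) = ψ(0) = 0, g ∈ H^2, and ψ maps D into D, then ‖g∘ψ‖_2 ≤ C ‖g‖_2 ‖ψ‖_2 for an absolute constant C, where ‖·‖_2 is the H^2 norm (boundary L^2 norm on the circle). -/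
open Complex Metric Set MeasureTheory intervalIntegral Real Filter Topology

noncomputable section

/-- mean value / Cauchy on unit circle -/
lemma cauchy_circle {F : ℂ → ℂ} (h : DiffContOnCl ℂ F (ball 0 1)) {a : ℂ}
    (ha : a ∈ ball (0:ℂ) 1) :
    ∫ t in (0:ℝ)..(2*π), Complex.exp (t*Complex.I) / (Complex.exp (t*Complex.I) - a)
      * F (Complex.exp (t*Complex.I)) = 2*π* F a := by
  have key := h.circleIntegral_sub_inv_smul (R := 1) (c := 0) (w := a) ha
  rw [circleIntegral] at key
  simp only [deriv_circleMap, smul_eq_mul, circleMap, ofReal_one, one_mul, zero_add] at key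
  have : ∀ t : ℝ, Complex.exp (↑t*Complex.I) * Complex.I *
      ((Complex.exp (↑t*Complex.I) - a)⁻¹ * F (Complex.exp (↑t*Complex.I)))
      = Complex.I * (Complex.exp (↑t*Complex.I) / (Complex.exp (↑t*Complex.I) - a)
          * F (Complex.exp (↑t*Complex.I))) := by
    intro t; ring
  rw [intervalIntegral.integral_congr (fun t _ => this t)] at key
  rw [intervalIntegral.integral_const_mul] at key
  refine mul_left_cancel₀ I_ne_zero (key.trans (by ring))

end

noncomputable section
open Complex

lemma mean_value {F : ℂ → ℂ} (h : DiffContOnCl ℂ F (Metric.ball 0 1)) :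
    ∫ t in (0:ℝ)..(2*π), F (Complex.exp (t*Complex.I)) = 2*π* F 0 := by
  have := cauchy_circle h (a := 0) (by simp [Real.pi_pos] <;> norm_num)
  rw [← this]
  refine intervalIntegral.integral_congr fun t _ => ?_
  have : Complex.exp (↑t*Complex.I) ≠ 0 := Complex.exp_ne_zero _
  field_simp
  simp

lemma circle_algebra {η a H A : ℂ} (h1 : η * H = 1) (h2 : η ≠ a) (h3 : (1:ℂ) - A*η ≠ 0) :
    (1 : ℂ) - a*A = (η/(η-a) + 1/(1-A*η) - 1) * ((η-a)*(H-A)) := by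
  have h2' : η - a ≠ 0 := sub_ne_zero.mpr h2
  field_simp
  ring_nf
  linear_combination (a*A - 1) * h1

lemma poisson_decomp {a η : ℂ} (ha : normSq a < 1) (hη : normSq η = 1) :
    (((1 - normSq a)/normSq (η - a) : ℝ) : ℂ)
      = η/(η-a) + 1/(1 - (starRingEnd ℂ) a * η) - 1 := by
  have hηa : η ≠ a := by
    intro h; rw [h] at hη; rw [hη] at ha; exact lt_irrefl _ ha
  have h2 : (1:ℂ) - (starRingEnd ℂ) a * η ≠ 0 := by
    intro h
    have h' : (starRingEnd ℂ) a * η = 1 := by linear_combination -h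
    have h3 : normSq ((starRingEnd ℂ) a * η) = 1 := by rw [h']; simp
    rw [map_mul, normSq_conj, hη, mul_one] at h3
    rw [h3] at ha; exact lt_irrefl _ ha
  have hη' : η * (starRingEnd ℂ) η = 1 := by
    rw [Complex.mul_conj, hη]; norm_num
  have hns : ((normSq (η - a) : ℝ) : ℂ) = (η - a) * ((starRingEnd ℂ) η - (starRingEnd ℂ) a) := by
    rw [← Complex.mul_conj]; simp [map_sub]
  have hnsa : ((normSq a : ℝ) : ℂ) = a * (starRingEnd ℂ) a := by rw [← Complex.mul_conj]
  have hns0' : ((normSq (η - a) : ℝ) : ℂ) ≠ 0 := by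
    have : normSq (η - a) ≠ 0 := by simpa [Complex.normSq_eq_zero] using sub_ne_zero.mpr hηa
    exact_mod_cast this
  rw [Complex.ofReal_div, div_eq_iff hns0', Complex.ofReal_sub, Complex.ofReal_one, hnsa, hns]
  exact circle_algebra hη' hηa h2

lemma exp_mem_cball (t : ℝ) : Complex.exp (t*Complex.I) ∈ Metric.closedBall (0:ℂ) 1 := by
  simp [Metric.mem_closedBall, Complex.dist_eq, Complex.norm_exp_ofReal_mul_I]

lemma exp_abs_one (t : ℝ) : ‖Complex.exp (t*Complex.I)‖ = 1 :=
  Complex.norm_exp_ofReal_mul_I t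

lemma exp_sub_ne {a : ℂ} (ha : a ∈ Metric.ball (0:ℂ) 1) (t : ℝ) :
    Complex.exp (t*Complex.I) - a ≠ 0 := by
  intro h
  have h1 : Complex.exp (↑t*Complex.I) = a := by linear_combination h
  have := exp_abs_one t
  rw [h1] at this
  rw [Metric.mem_ball, Complex.dist_eq, sub_zero] at ha
  rw [this] at ha; exact lt_irrefl _ ha

lemma one_sub_conj_ne {a z : ℂ} (ha : a ∈ Metric.ball (0:ℂ) 1)
    (hz : z ∈ Metric.closedBall (0:ℂ) 1) : (1:ℂ) - (starRingEnd ℂ) a * z ≠ 0 := by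
  rw [Metric.mem_ball, Complex.dist_eq, sub_zero] at ha
  rw [Metric.mem_closedBall, Complex.dist_eq, sub_zero] at hz
  intro h
  have h' : (starRingEnd ℂ) a * z = 1 := by linear_combination -h
  have : ‖(starRingEnd ℂ) a * z‖ = 1 := by rw [h']; simp
  rw [norm_mul, Complex.norm_conj] at this
  nlinarith [norm_nonneg a, norm_nonneg z]

lemma contF_circle {F : ℂ → ℂ} (h : DiffContOnCl ℂ F (Metric.ball 0 1)) :
    Continuous fun t : ℝ => F (Complex.exp (t*Complex.I)) := by
  have hc : ContinuousOn F (Metric.closedBall (0:ℂ) 1) := by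
    have := h.continuousOn
    rwa [closure_ball (0:ℂ) one_ne_zero] at this
  exact hc.comp_continuous (by continuity) exp_mem_cball

lemma poisson_reproduce {F : ℂ → ℂ} (h : DiffContOnCl ℂ F (Metric.ball 0 1)) {a : ℂ}
    (ha : a ∈ Metric.ball (0:ℂ) 1) :
    ∫ t in (0:ℝ)..(2*π),
      (((1 - normSq a)/normSq (Complex.exp (t*Complex.I) - a) : ℝ) : ℂ)
        * F (Complex.exp (t*Complex.I)) = 2*π* F a := by
  have ha' : normSq a < 1 := by
    rw [Metric.mem_ball, Complex.dist_eq, sub_zero] at ha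
    rw [← Complex.sq_norm]; nlinarith [norm_nonneg a]
  -- pieces
  set e : ℝ → ℂ := fun t => Complex.exp (t*Complex.I) with he
  have hcont_e : Continuous e := by continuity
  have hF : Continuous fun t : ℝ => F (e t) := contF_circle h
  have hA : Continuous fun t : ℝ => e t / (e t - a) * F (e t) := by
    apply Continuous.mul _ hF
    exact hcont_e.div (hcont_e.sub continuous_const) (fun t => exp_sub_ne ha t)
  have hB : Continuous fun t : ℝ => (1/(1 - (starRingEnd ℂ) a * e t)) * F (e t) := by
    apply Continuous.mul _ hF
    exact continuous_const.div (continuous_const.sub (continuous_const.mul hcont_e))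
      (fun t => one_sub_conj_ne ha (exp_mem_cball t))
  have hdecomp : ∀ t ∈ Set.uIcc (0:ℝ) (2*π),
      (((1 - normSq a)/normSq (e t - a) : ℝ) : ℂ) * F (e t)
      = e t / (e t - a) * F (e t) + (1/(1 - (starRingEnd ℂ) a * e t)) * F (e t)
        - F (e t) := by
    intro t _
    have hη : normSq (e t) = 1 := by
      rw [← Complex.sq_norm, exp_abs_one]; norm_num
    rw [poisson_decomp ha' hη]; ring
  rw [intervalIntegral.integral_congr hdecomp]
  rw [intervalIntegral.integral_sub (hA.intervalIntegrable _ _ |>.add (hB.intervalIntegrable _ _)) (hF.intervalIntegrable _ _),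
      intervalIntegral.integral_add (hA.intervalIntegrable _ _) (hB.intervalIntegrable _ _)]
  have i1 : ∫ t in (0:ℝ)..(2*π), e t / (e t - a) * F (e t) = 2*π*F a := cauchy_circle h ha
  have i3 : ∫ t in (0:ℝ)..(2*π), F (e t) = 2*π*F 0 := mean_value h
  have hGd : DiffContOnCl ℂ (fun z => (1/(1 - (starRingEnd ℂ) a * z)) * F z) (Metric.ball 0 1) := by
    constructor
    · apply DifferentiableOn.mul _ h.differentiableOn
      apply DifferentiableOn.div (differentiableOn_const _)
      · exact (differentiableOn_const _).sub ((differentiableOn_const _).mul differentiableOn_id)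
      · intro z hz
        exact one_sub_conj_ne ha (Metric.ball_subset_closedBall hz)
    · rw [closure_ball (0:ℂ) one_ne_zero]
      have hFc : ContinuousOn F (Metric.closedBall (0:ℂ) 1) := by
        have := h.continuousOn; rwa [closure_ball (0:ℂ) one_ne_zero] at this
      apply ContinuousOn.mul _ hFc
      apply ContinuousOn.div continuousOn_const
      · exact continuousOn_const.sub (continuousOn_const.mul continuousOn_id)
      · intro z hz; exact one_sub_conj_ne ha hz
  have i2 : ∫ t in (0:ℝ)..(2*π), (1/(1 - (starRingEnd ℂ) a * e t)) * F (e t) = 2*π*F 0 := by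
    have := mean_value hGd
    simp only [he] at this ⊢
    rw [this]
    norm_num
  rw [i1, i2, i3]
  ring

lemma normSq_lt_one {w : ℂ} (hw : w ∈ Metric.ball (0:ℂ) 1) : normSq w < 1 := by
  rw [Metric.mem_ball, Complex.dist_eq, sub_zero] at hw
  rw [← Complex.sq_norm]; nlinarith [norm_nonneg w]

lemma normSq_exp_sub_pos {w : ℂ} (hw : w ∈ Metric.ball (0:ℂ) 1) (t : ℝ) :
    0 < normSq (Complex.exp (t*Complex.I) - w) := by
  have := exp_sub_ne hw t
  have h2 : normSq (Complex.exp (t*Complex.I) - w) ≠ 0 := by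
    simpa [Complex.normSq_eq_zero] using this
  rcases lt_or_eq_of_le (normSq_nonneg _) with h | h
  · exact h
  · exact absurd h.symm h2

lemma poisson_mass {a : ℂ} (ha : a ∈ Metric.ball (0:ℂ) 1) :
    ∫ t in (0:ℝ)..(2*π), (1 - normSq a)/normSq (Complex.exp (t*Complex.I) - a) = 2*π := by
  have := poisson_reproduce (F := fun _ => 1) ⟨differentiableOn_const _, continuousOn_const⟩ ha
  simp only [mul_one] at this
  rw [intervalIntegral.integral_ofReal] at this
  exact_mod_cast this

lemma cs_bound {p f : ℝ → ℝ} (hp : Continuous p) (hf : Continuous f)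
    (hp0 : ∀ t, 0 ≤ p t) {M : ℝ} (hM : (∫ t in (0:ℝ)..(2*π), p t) = M) (hMpos : 0 < M) :
    (∫ t in (0:ℝ)..(2*π), p t * f t)^2 ≤ M * ∫ t in (0:ℝ)..(2*π), p t * (f t)^2 := by
  set B := ∫ t in (0:ℝ)..(2*π), p t * f t with hB
  set A := ∫ t in (0:ℝ)..(2*π), p t * (f t)^2 with hA
  have h2π : (0:ℝ) ≤ 2*π := by positivity
  have key : (0:ℝ) ≤ ∫ t in (0:ℝ)..(2*π), p t * (M * f t - B)^2 :=
    intervalIntegral.integral_nonneg h2π (fun u _ => mul_nonneg (hp0 u) (sq_nonneg _))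
  have expand : ∀ t ∈ Set.uIcc (0:ℝ) (2*π), p t * (M * f t - B)^2
      = M^2*(p t * (f t)^2) - (2*M*B)*(p t * f t) + B^2 * p t := by
    intro t _; ring
  rw [intervalIntegral.integral_congr expand] at key
  have i1 : IntervalIntegrable (fun t => M^2*(p t * (f t)^2)) MeasureTheory.volume 0 (2*π) :=
    ((continuous_const.mul (hp.mul (hf.pow 2)))).intervalIntegrable _ _
  have i2 : IntervalIntegrable (fun t => (2*M*B)*(p t * f t)) MeasureTheory.volume 0 (2*π) :=
    ((continuous_const.mul (hp.mul hf))).intervalIntegrable _ _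
  have i3 : IntervalIntegrable (fun t => B^2 * p t) MeasureTheory.volume 0 (2*π) :=
    ((continuous_const.mul hp)).intervalIntegrable _ _
  rw [intervalIntegral.integral_add (i1.sub i2) i3, intervalIntegral.integral_sub i1 i2,
    intervalIntegral.integral_const_mul, intervalIntegral.integral_const_mul,
    intervalIntegral.integral_const_mul, hM, ← hA, ← hB] at key
  nlinarith [key, hMpos]

lemma h_pointwise {h : ℂ → ℂ} (hd : DiffContOnCl ℂ h (Metric.ball 0 1)) {w : ℂ}
    (hw : w ∈ Metric.ball (0:ℂ) 1) :
    ‖h w‖^2 ≤ (2*π)⁻¹ * ∫ t in (0:ℝ)..(2*π),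
      ((1 - normSq w)/normSq (Complex.exp (t*Complex.I) - w)) * ‖h (Complex.exp (t*Complex.I))‖^2 := by
  set p : ℝ → ℝ := fun t => (1 - normSq w)/normSq (Complex.exp (t*Complex.I) - w) with hp_def
  have hpc : Continuous p := by
    apply continuous_const.div
    · continuity
    · intro t; exact (normSq_exp_sub_pos hw t).ne'
  have hp0 : ∀ t, 0 ≤ p t :=
    fun t => div_nonneg (by linarith [normSq_lt_one hw]) (normSq_nonneg _)
  have hfc : Continuous fun t : ℝ => ‖h (Complex.exp (t*Complex.I))‖ := (contF_circle hd).norm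
  have hM := poisson_mass hw
  have hrep := poisson_reproduce hd hw
  have hnorm : ‖(2*(π:ℂ)*h w)‖ ≤ ∫ t in (0:ℝ)..(2*π), p t * ‖h (Complex.exp (t*Complex.I))‖ := by
    rw [← hrep]
    refine le_trans (intervalIntegral.norm_integral_le_integral_norm (by positivity)) ?_
    refine le_of_eq (intervalIntegral.integral_congr fun t _ => ?_)
    rw [norm_mul, Complex.norm_real, Real.norm_eq_abs, _root_.abs_of_nonneg (hp0 t)]
  have hnorm' : 2*π*‖h w‖ ≤ ∫ t in (0:ℝ)..(2*π), p t * ‖h (Complex.exp (t*Complex.I))‖ := by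
    refine le_trans (le_of_eq ?_) hnorm
    rw [show (2*(π:ℂ)*h w) = ((2*π:ℝ):ℂ) * h w by push_cast; ring]
    rw [norm_mul, Complex.norm_real, Real.norm_eq_abs]
    rw [_root_.abs_of_nonneg Real.two_pi_pos.le]
  have hcs := cs_bound hpc hfc hp0 hM Real.two_pi_pos
  have hsq : (2*π*‖h w‖)^2 ≤ (∫ t in (0:ℝ)..(2*π), p t * ‖h (Complex.exp (t*Complex.I))‖)^2 :=
    pow_le_pow_left₀ (by positivity) hnorm' 2
  have key := le_trans hsq hcs
  rw [inv_mul_eq_div, le_div_iff₀ Real.two_pi_pos]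
  nlinarith [key, Real.pi_pos]

lemma re_div (z d : ℂ) : (z/d).re = (z * (starRingEnd ℂ) d).re / normSq d := by
  rcases eq_or_ne d 0 with h | h
  · simp [h]
  · have hns : normSq d ≠ 0 := by simpa [Complex.normSq_eq_zero] using h
    rw [div_eq_mul_inv, Complex.inv_def, ← mul_assoc, Complex.mul_re]
    simp only [Complex.ofReal_re, Complex.ofReal_im, mul_zero, sub_zero]
    field_simp

lemma core_identity {v : ℂ} (hv : v ≠ 1) :
    normSq v * (1 - normSq v)/normSq (1-v)
      = normSq v + 2*((starRingEnd ℂ) v * v^2/(1-v)).re := by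
  have hd : (1:ℂ) - v ≠ 0 := sub_ne_zero.mpr (Ne.symm hv)
  have hns : normSq (1-v) ≠ 0 := by simpa [Complex.normSq_eq_zero] using hd
  rw [re_div]
  field_simp
  simp only [pow_two, map_sub, map_one, Complex.normSq_apply, Complex.mul_re, Complex.mul_im,
    Complex.sub_re, Complex.sub_im, Complex.one_re, Complex.one_im, Complex.conj_re,
    Complex.conj_im]
  ring

lemma core_pointwise {v : ℂ} (hv : ‖v‖ < 1) :
    normSq v * (1 - normSq v)/normSq (1-v) ≤ 3*normSq v + 2*(v^2/(1-v)).re := by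
  have hv1 : v ≠ 1 := by intro h; rw [h] at hv; simp at hv
  have hd : (1:ℂ) - v ≠ 0 := sub_ne_zero.mpr (Ne.symm hv1)
  rw [core_identity hv1]
  have key : ((starRingEnd ℂ) v * v^2/(1-v)).re - (v^2/(1-v)).re ≤ normSq v := by
    have heq : (starRingEnd ℂ) v * v^2/(1-v) - v^2/(1-v)
        = ((starRingEnd ℂ) v - 1) * (v^2/(1-v)) := by field_simp
    rw [← Complex.sub_re, heq]
    refine le_trans (Complex.re_le_norm _) ?_
    rw [norm_mul, norm_div]
    have h1 : ‖(starRingEnd ℂ) v - 1‖ = ‖1-v‖ := by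
      rw [show (starRingEnd ℂ) v - 1 = (starRingEnd ℂ) (v - 1) by rw [map_sub, map_one]]
      rw [Complex.norm_conj, norm_sub_rev]
    have h2 : ‖1-v‖ ≠ 0 := norm_ne_zero_iff.mpr hd
    rw [h1, mul_comm, div_mul_cancel₀ _ h2, norm_pow, ← Complex.sq_norm]
  linarith

lemma intervalIntegral_re {f : ℝ → ℂ} (hi : IntervalIntegrable f MeasureTheory.volume 0 (2*π)) :
    ∫ t in (0:ℝ)..(2*π), (f t).re = (∫ t in (0:ℝ)..(2*π), f t).re := by
  rw [intervalIntegral.integral_of_le Real.two_pi_pos.le,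
      intervalIntegral.integral_of_le Real.two_pi_pos.le]
  have hint : MeasureTheory.IntegrableOn f (Set.Ioc 0 (2*π)) MeasureTheory.volume := by
    have := (intervalIntegrable_iff.mp hi)
    rwa [Set.uIoc_of_le Real.two_pi_pos.le] at this
  have := integral_re (μ := MeasureTheory.volume.restrict (Set.Ioc (0:ℝ) (2*π))) (𝕜 := ℂ) hint
  simpa using this

lemma exp_mem_cball' (θ : ℝ) : Complex.exp (θ*Complex.I) ∈ Metric.closedBall (0:ℂ) 1 :=
  exp_mem_cball θ

lemma core_estimate {u : ℂ → ℂ} (hd : DiffContOnCl ℂ u (Metric.ball 0 1)) (hu0 : u 0 = 0)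
    (hu1 : ∀ z ∈ Metric.closedBall (0:ℂ) 1, ‖u z‖ < 1) :
    ∫ θ in (0:ℝ)..(2*π), normSq (u (Complex.exp (θ*Complex.I)))
        * (1 - normSq (u (Complex.exp (θ*Complex.I))))/normSq (1 - u (Complex.exp (θ*Complex.I)))
      ≤ 3 * ∫ θ in (0:ℝ)..(2*π), normSq (u (Complex.exp (θ*Complex.I))) := by
  have hcont : Continuous fun θ:ℝ => u (Complex.exp (θ*Complex.I)) := contF_circle hd
  have hball : ∀ z ∈ Metric.closedBall (0:ℂ) 1, (1:ℂ) - u z ≠ 0 := by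
    intro z hz h
    have h2 : u z = 1 := by linear_combination -h
    have h3 := hu1 z hz
    rw [h2] at h3; simp at h3
  have hG : DiffContOnCl ℂ (fun z => (u z)^2/(1 - u z)) (Metric.ball 0 1) := by
    constructor
    · exact (hd.differentiableOn.pow 2).div
        ((differentiableOn_const _).sub hd.differentiableOn)
        (fun z hz => hball z (Metric.ball_subset_closedBall hz))
    · rw [closure_ball (0:ℂ) one_ne_zero]
      have huc : ContinuousOn u (Metric.closedBall (0:ℂ) 1) := by
        have := hd.continuousOn; rwa [closure_ball (0:ℂ) one_ne_zero] at this
      exact (huc.pow 2).div (continuousOn_const.sub huc) hball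
  have hmv := mean_value hG
  rw [hu0] at hmv
  norm_num at hmv
  have hGcont : Continuous fun θ:ℝ => (u (Complex.exp (θ*Complex.I)))^2
      / (1 - u (Complex.exp (θ*Complex.I))) := by
    refine (hcont.pow 2).div (continuous_const.sub hcont) ?_
    intro θ
    exact hball _ (exp_mem_cball θ)
  have hre : ∫ θ in (0:ℝ)..(2*π),
      ((u (Complex.exp (θ*Complex.I)))^2/(1 - u (Complex.exp (θ*Complex.I)))).re = 0 := by
    rw [intervalIntegral_re (hGcont.intervalIntegrable _ _), hmv]
    simp
  have hmono : ∫ θ in (0:ℝ)..(2*π), normSq (u (Complex.exp (θ*Complex.I)))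
        * (1 - normSq (u (Complex.exp (θ*Complex.I))))/normSq (1 - u (Complex.exp (θ*Complex.I)))
      ≤ ∫ θ in (0:ℝ)..(2*π), (3 * normSq (u (Complex.exp (θ*Complex.I)))
        + 2*(((u (Complex.exp (θ*Complex.I)))^2/(1 - u (Complex.exp (θ*Complex.I)))).re)) := by
    refine intervalIntegral.integral_mono_on Real.two_pi_pos.le ?_ ?_ ?_
    · apply Continuous.intervalIntegrable
      apply Continuous.div
      · exact (Complex.continuous_normSq.comp hcont).mul
          (continuous_const.sub (Complex.continuous_normSq.comp hcont))
      · exact Complex.continuous_normSq.comp (continuous_const.sub hcont)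
      · intro θ
        simpa [Complex.normSq_eq_zero] using hball _ (exp_mem_cball θ)
    · apply Continuous.intervalIntegrable
      exact (continuous_const.mul (Complex.continuous_normSq.comp hcont)).add
        (continuous_const.mul (Complex.continuous_re.comp hGcont))
    · intro θ _
      have hlt : ‖u (Complex.exp (θ*Complex.I))‖ < 1 := hu1 _ (exp_mem_cball θ)
      have h := core_pointwise hlt
      exact h
  refine le_trans hmono ?_
  have i1 : IntervalIntegrable (fun θ:ℝ => 3 * normSq (u (Complex.exp (θ*Complex.I))))
      MeasureTheory.volume 0 (2*π) :=
    (continuous_const.mul (Complex.continuous_normSq.comp hcont)).intervalIntegrable _ _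
  have i2 : IntervalIntegrable
      (fun θ:ℝ => 2*(((u (Complex.exp (θ*Complex.I)))^2/(1 - u (Complex.exp (θ*Complex.I)))).re))
      MeasureTheory.volume 0 (2*π) :=
    (continuous_const.mul (Complex.continuous_re.comp hGcont)).intervalIntegrable _ _
  rw [intervalIntegral.integral_add i1 i2, intervalIntegral.integral_const_mul,
      intervalIntegral.integral_const_mul, hre]
  simp

lemma r_exp_mem_ball {r : ℝ} (hr0 : 0 ≤ r) (hr1 : r < 1) (θ : ℝ) {z : ℂ}
    (hz : z ∈ Metric.closedBall (0:ℂ) 1) : (r:ℂ)*z ∈ Metric.ball (0:ℂ) 1 := by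
  rw [Metric.mem_closedBall, Complex.dist_eq, sub_zero] at hz
  rw [Metric.mem_ball, Complex.dist_eq, sub_zero, norm_mul, Complex.norm_real,
    Real.norm_eq_abs, _root_.abs_of_nonneg hr0]
  nlinarith [norm_nonneg z]

lemma inner_bound {ψ : ℂ → ℂ} (hψd : DifferentiableOn ℂ ψ (Metric.ball 0 1))
    (hψc : ContinuousOn ψ (Metric.closedBall 0 1))
    (hmo : Set.MapsTo ψ (Metric.ball 0 1) (Metric.ball 0 1)) (hψ0 : ψ 0 = 0)
    {r : ℝ} (hr0 : 0 < r) (hr1 : r < 1) (t : ℝ) :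
    ∫ θ in (0:ℝ)..(2*π), normSq (ψ ((r:ℂ)*Complex.exp (θ*Complex.I)))
        * (1 - normSq (ψ ((r:ℂ)*Complex.exp (θ*Complex.I))))
          / normSq (Complex.exp (t*Complex.I) - ψ ((r:ℂ)*Complex.exp (θ*Complex.I)))
      ≤ 3 * ∫ θ in (0:ℝ)..(2*π), normSq (ψ ((r:ℂ)*Complex.exp (θ*Complex.I))) := by
  set η : ℂ := Complex.exp (t*Complex.I) with hη_def
  have hηns : normSq η = 1 := by
    rw [← Complex.sq_norm, hη_def, exp_abs_one]; norm_num
  have hηcns : normSq ((starRingEnd ℂ) η) = 1 := by rw [normSq_conj, hηns]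
  set u : ℂ → ℂ := fun z => (starRingEnd ℂ) η * ψ ((r:ℂ)*z) with hu_def
  have hmem : ∀ z ∈ Metric.closedBall (0:ℂ) 1, (r:ℂ)*z ∈ Metric.ball (0:ℂ) 1 :=
    fun z hz => r_exp_mem_ball hr0.le hr1 0 hz
  have hu0 : u 0 = 0 := by simp [hu_def, hψ0]
  have hud : DiffContOnCl ℂ u (Metric.ball 0 1) := by
    constructor
    · exact (hψd.comp (((differentiable_const _).mul differentiable_id).differentiableOn)
        (fun z hz => hmem z (Metric.ball_subset_closedBall hz))).const_mul _
    · rw [closure_ball (0:ℂ) one_ne_zero]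
      exact continuousOn_const.mul (hψc.comp (Continuous.continuousOn (by continuity))
        (fun z hz => Metric.ball_subset_closedBall (hmem z hz)))
  have hu1 : ∀ z ∈ Metric.closedBall (0:ℂ) 1, ‖u z‖ < 1 := by
    intro z hz
    have h1 := hmo (hmem z hz)
    rw [Metric.mem_ball, Complex.dist_eq, sub_zero] at h1
    rw [hu_def]
    simp only [norm_mul, Complex.norm_conj]
    rw [show ‖η‖ = 1 from exp_abs_one t]
    simpa using h1
  have hcore := core_estimate hud hu0 hu1
  have heq1 : ∀ θ ∈ Set.uIcc (0:ℝ) (2*π),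
      normSq (u (Complex.exp (θ*Complex.I)))
        * (1 - normSq (u (Complex.exp (θ*Complex.I))))/normSq (1 - u (Complex.exp (θ*Complex.I)))
      = normSq (ψ ((r:ℂ)*Complex.exp (θ*Complex.I)))
        * (1 - normSq (ψ ((r:ℂ)*Complex.exp (θ*Complex.I))))
          / normSq (η - ψ ((r:ℂ)*Complex.exp (θ*Complex.I))) := by
    intro θ _
    set w := ψ ((r:ℂ)*Complex.exp (θ*Complex.I))
    have e1 : normSq (u (Complex.exp (θ*Complex.I))) = normSq w := by
      rw [hu_def]; simp only [map_mul]; rw [hηcns, one_mul]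
    have e2 : (1:ℂ) - u (Complex.exp (θ*Complex.I)) = (starRingEnd ℂ) η * (η - w) := by
      rw [hu_def]
      have : (starRingEnd ℂ) η * η = (normSq η : ℂ) := by
        rw [mul_comm, Complex.mul_conj]
      rw [mul_sub, this, hηns]
      push_cast
      ring
    rw [e1, e2, map_mul, hηcns, one_mul]
  have heq2 : ∀ θ ∈ Set.uIcc (0:ℝ) (2*π),
      normSq (u (Complex.exp (θ*Complex.I))) = normSq (ψ ((r:ℂ)*Complex.exp (θ*Complex.I))) := by
    intro θ _
    rw [hu_def]; simp only [map_mul]; rw [hηcns, one_mul]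
  rw [intervalIntegral.integral_congr heq1, intervalIntegral.integral_congr heq2] at hcore
  exact hcore

lemma main_r {ψ h : ℂ → ℂ} (hψd : DifferentiableOn ℂ ψ (Metric.ball 0 1))
    (hψc : ContinuousOn ψ (Metric.closedBall 0 1))
    (hmo : Set.MapsTo ψ (Metric.ball 0 1) (Metric.ball 0 1)) (hψ0 : ψ 0 = 0)
    (hdc : DiffContOnCl ℂ h (Metric.ball 0 1))
    {r : ℝ} (hr0 : 0 < r) (hr1 : r < 1) :
    ∫ θ in (0:ℝ)..(2*π), normSq (ψ ((r:ℂ)*Complex.exp (θ*Complex.I)))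
        * ‖h (ψ ((r:ℂ)*Complex.exp (θ*Complex.I)))‖^2
      ≤ (2*π)⁻¹ * (3 * (∫ θ in (0:ℝ)..(2*π), normSq (ψ ((r:ℂ)*Complex.exp (θ*Complex.I))))
          * ∫ t in (0:ℝ)..(2*π), ‖h (Complex.exp (t*Complex.I))‖^2) := by
  have hw : ∀ θ:ℝ, ψ ((r:ℂ)*Complex.exp (θ*Complex.I)) ∈ Metric.ball (0:ℂ) 1 :=
    fun θ => hmo (r_exp_mem_ball hr0.le hr1 θ (exp_mem_cball θ))
  have hcψ : Continuous fun θ:ℝ => ψ ((r:ℂ)*Complex.exp (θ*Complex.I)) :=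
    hψc.comp_continuous (by continuity)
      (fun θ => Metric.ball_subset_closedBall (r_exp_mem_ball hr0.le hr1 θ (exp_mem_cball θ)))
  have hch : Continuous fun t:ℝ => h (Complex.exp (t*Complex.I)) := contF_circle hdc
  have hexp : Continuous fun t:ℝ => Complex.exp ((t:ℂ)*Complex.I) := by continuity
  have hch2 : Continuous fun t:ℝ => ‖h (Complex.exp (t*Complex.I))‖^2 := (hch.norm.pow 2)
  -- the kernel
  set K : ℝ → ℝ → ℝ := fun θ t => normSq (ψ ((r:ℂ)*Complex.exp (θ*Complex.I)))
      * ((1 - normSq (ψ ((r:ℂ)*Complex.exp (θ*Complex.I))))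
          / normSq (Complex.exp (t*Complex.I) - ψ ((r:ℂ)*Complex.exp (θ*Complex.I)))
        * ‖h (Complex.exp (t*Complex.I))‖^2) with hK_def
  have hKcont : Continuous (Function.uncurry K) := by
    apply Continuous.mul
    · exact Complex.continuous_normSq.comp (hcψ.comp continuous_fst)
    · apply Continuous.mul
      · apply Continuous.div
        · exact continuous_const.sub
            (Complex.continuous_normSq.comp (hcψ.comp continuous_fst))
        · exact Complex.continuous_normSq.comp
            ((hexp.comp continuous_snd).sub (hcψ.comp continuous_fst))
        · rintro ⟨θ, t⟩
          exact (normSq_exp_sub_pos (hw θ) t).ne'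
      · exact hch2.comp continuous_snd
  set μ : MeasureTheory.Measure ℝ := MeasureTheory.volume.restrict (Set.Ioc (0:ℝ) (2*π))
    with hμ_def
  have hKint : MeasureTheory.Integrable (Function.uncurry K) (μ.prod μ) := by
    rw [hμ_def, MeasureTheory.Measure.prod_restrict, ← MeasureTheory.Measure.volume_eq_prod]
    have h1 : MeasureTheory.IntegrableOn (Function.uncurry K)
        (Set.Icc (0:ℝ) (2*π) ×ˢ Set.Icc (0:ℝ) (2*π)) MeasureTheory.volume :=
      hKcont.continuousOn.integrableOn_compact (isCompact_Icc.prod isCompact_Icc)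
    exact h1.mono_set (Set.prod_mono Set.Ioc_subset_Icc_self Set.Ioc_subset_Icc_self)
  have hconv : ∀ f : ℝ → ℝ, ∫ x in (0:ℝ)..(2*π), f x = ∫ x, f x ∂μ := by
    intro f
    rw [hμ_def, intervalIntegral.integral_of_le Real.two_pi_pos.le]
  -- step 1 : pointwise in θ
  have hstep1 : ∀ θ:ℝ, normSq (ψ ((r:ℂ)*Complex.exp (θ*Complex.I)))
      * ‖h (ψ ((r:ℂ)*Complex.exp (θ*Complex.I)))‖^2 ≤ (2*π)⁻¹ * ∫ t, K θ t ∂μ := by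
    intro θ
    set w := ψ ((r:ℂ)*Complex.exp (θ*Complex.I)) with hw_def
    have hp := h_pointwise hdc (hw θ)
    calc normSq w * ‖h w‖^2
        ≤ normSq w * ((2*π)⁻¹ * ∫ t in (0:ℝ)..(2*π),
            (1 - normSq w)/normSq (Complex.exp (t*Complex.I) - w)
              * ‖h (Complex.exp (t*Complex.I))‖^2) :=
          mul_le_mul_of_nonneg_left hp (normSq_nonneg w)
      _ = (2*π)⁻¹ * (normSq w * ∫ t in (0:ℝ)..(2*π),
            (1 - normSq w)/normSq (Complex.exp (t*Complex.I) - w)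
              * ‖h (Complex.exp (t*Complex.I))‖^2) := by ring
      _ = (2*π)⁻¹ * ∫ t in (0:ℝ)..(2*π), normSq w *
            ((1 - normSq w)/normSq (Complex.exp (t*Complex.I) - w)
              * ‖h (Complex.exp (t*Complex.I))‖^2) := by
          rw [intervalIntegral.integral_const_mul]
      _ = (2*π)⁻¹ * ∫ t in (0:ℝ)..(2*π), K θ t := rfl
      _ = (2*π)⁻¹ * ∫ t, K θ t ∂μ := by rw [hconv]
  -- step 2 : integrate over θ
  have hLcont : Continuous fun θ:ℝ => normSq (ψ ((r:ℂ)*Complex.exp (θ*Complex.I)))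
      * ‖h (ψ ((r:ℂ)*Complex.exp (θ*Complex.I)))‖^2 := by
    apply Continuous.mul (Complex.continuous_normSq.comp hcψ)
    apply Continuous.pow
    apply Continuous.norm
    have hhc : ContinuousOn h (Metric.closedBall (0:ℂ) 1) := by
      have := hdc.continuousOn; rwa [closure_ball (0:ℂ) one_ne_zero] at this
    exact hhc.comp_continuous hcψ (fun θ => Metric.ball_subset_closedBall (hw θ))
  have hmarg : MeasureTheory.Integrable (fun θ => ∫ t, K θ t ∂μ) μ :=
    hKint.integral_prod_left
  have hstep2 : ∫ θ, (normSq (ψ ((r:ℂ)*Complex.exp (θ*Complex.I)))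
        * ‖h (ψ ((r:ℂ)*Complex.exp (θ*Complex.I)))‖^2) ∂μ
      ≤ ∫ θ, ((2*π)⁻¹ * ∫ t, K θ t ∂μ) ∂μ := by
    refine MeasureTheory.integral_mono ?_ (hmarg.const_mul _) (fun θ => hstep1 θ)
    rw [hμ_def]
    exact (hLcont.integrableOn_Ioc)
  -- swap
  have hswap : ∫ θ, (∫ t, K θ t ∂μ) ∂μ = ∫ t, (∫ θ, K θ t ∂μ) ∂μ :=
    MeasureTheory.integral_integral_swap hKint
  -- step 4 : inner bound for fixed t
  have hib : ∀ t:ℝ, ∫ θ, K θ t ∂μ ≤ ‖h (Complex.exp (t*Complex.I))‖^2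
      * (3 * ∫ θ, normSq (ψ ((r:ℂ)*Complex.exp (θ*Complex.I))) ∂μ) := by
    intro t
    have heq : (fun θ : ℝ => K θ t) = fun θ : ℝ => ‖h (Complex.exp (t*Complex.I))‖^2
        * (normSq (ψ ((r:ℂ)*Complex.exp (θ*Complex.I)))
          * (1 - normSq (ψ ((r:ℂ)*Complex.exp (θ*Complex.I))))
            / normSq (Complex.exp (t*Complex.I) - ψ ((r:ℂ)*Complex.exp (θ*Complex.I)))) := by
      funext θ; rw [hK_def]; ring
    rw [heq, MeasureTheory.integral_const_mul]
    refine mul_le_mul_of_nonneg_left ?_ (by positivity)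
    have hthis := inner_bound hψd hψc hmo hψ0 hr0 hr1 t
    rw [hconv, hconv] at hthis
    exact hthis
  -- step 5 : integrate over t
  have hrhs_int : MeasureTheory.Integrable (fun t:ℝ => ‖h (Complex.exp (t*Complex.I))‖^2
      * (3 * ∫ θ, normSq (ψ ((r:ℂ)*Complex.exp (θ*Complex.I))) ∂μ)) μ := by
    rw [hμ_def]
    exact (hch2.mul continuous_const).integrableOn_Ioc
  have hstep5 : ∫ t, (∫ θ, K θ t ∂μ) ∂μ
      ≤ ∫ t, (‖h (Complex.exp (t*Complex.I))‖^2
        * (3 * ∫ θ, normSq (ψ ((r:ℂ)*Complex.exp (θ*Complex.I))) ∂μ)) ∂μ :=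
    MeasureTheory.integral_mono hKint.integral_prod_right hrhs_int (fun t => hib t)
  -- assemble
  rw [hconv, hconv, hconv]
  refine le_trans hstep2 ?_
  rw [MeasureTheory.integral_const_mul, hswap]
  refine le_trans (mul_le_mul_of_nonneg_left hstep5 (by positivity)) (le_of_eq ?_)
  rw [MeasureTheory.integral_mul_const]
  ring

lemma tendsto_circle_integral {f : ℂ → ℂ} (hfc : ContinuousOn f (Metric.closedBall (0:ℂ) 1)) :
    Filter.Tendsto (fun r : ℝ => ∫ θ in (0:ℝ)..(2*π), ‖f ((r:ℂ)*Complex.exp (θ*Complex.I))‖^2)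
      (nhdsWithin 1 (Set.Iio 1))
      (𝓝 (∫ θ in (0:ℝ)..(2*π), ‖f (Complex.exp (θ*Complex.I))‖^2)) := by
  obtain ⟨M, hM⟩ := (isCompact_closedBall (0:ℂ) 1).exists_bound_of_continuousOn hfc
  have hM0 : 0 ≤ M := le_trans (norm_nonneg (f 0)) (hM 0 (by simp))
  have hIoo : Set.Ioo (0:ℝ) 1 ∈ nhdsWithin (1:ℝ) (Set.Iio 1) :=
    Ioo_mem_nhdsLT_of_mem (by norm_num : (1:ℝ) ∈ Set.Ioc (0:ℝ) 1)
  apply intervalIntegral.tendsto_integral_filter_of_dominated_convergence (fun _ => M^2)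
  · filter_upwards [hIoo] with r hr
    have hc : Continuous fun θ:ℝ => ‖f ((r:ℂ)*Complex.exp (θ*Complex.I))‖^2 := by
      apply Continuous.pow
      apply Continuous.norm
      exact hfc.comp_continuous (by continuity)
        (fun θ => Metric.ball_subset_closedBall (r_exp_mem_ball hr.1.le hr.2 θ (exp_mem_cball θ)))
    exact hc.aestronglyMeasurable
  · filter_upwards [hIoo] with r hr
    apply MeasureTheory.ae_of_all
    intro θ _
    have hmem : (r:ℂ)*Complex.exp (θ*Complex.I) ∈ Metric.closedBall (0:ℂ) 1 :=
      Metric.ball_subset_closedBall (r_exp_mem_ball hr.1.le hr.2 θ (exp_mem_cball θ))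
    rw [Real.norm_eq_abs, _root_.abs_of_nonneg (by positivity)]
    exact pow_le_pow_left₀ (norm_nonneg _) (hM _ hmem) 2
  · exact intervalIntegrable_const
  · apply MeasureTheory.ae_of_all
    intro θ _
    have t0 : Filter.Tendsto (fun r:ℝ => (r:ℂ)*Complex.exp (θ*Complex.I))
        (nhdsWithin 1 (Set.Iio 1)) (𝓝 (Complex.exp (θ*Complex.I))) := by
      have h1 : Filter.Tendsto (fun r:ℝ => (r:ℂ)) (nhdsWithin 1 (Set.Iio 1)) (𝓝 1) :=
        (Complex.continuous_ofReal.tendsto 1).mono_left nhdsWithin_le_nhds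
      have h2 := h1.mul_const (Complex.exp (θ*Complex.I))
      rwa [one_mul] at h2
    have t0' : Filter.Tendsto (fun r:ℝ => (r:ℂ)*Complex.exp (θ*Complex.I))
        (nhdsWithin 1 (Set.Iio 1))
        (nhdsWithin (Complex.exp (θ*Complex.I)) (Metric.closedBall (0:ℂ) 1)) := by
      rw [tendsto_nhdsWithin_iff]
      refine ⟨t0, ?_⟩
      filter_upwards [hIoo] with r hr
      exact Metric.ball_subset_closedBall (r_exp_mem_ball hr.1.le hr.2 θ (exp_mem_cball θ))
    have t1 := (hfc _ (exp_mem_cball θ)).tendsto.comp t0'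
    exact (t1.norm).pow 2

theorem composition_H2_bound' :
    ∀ g ψ : ℂ → ℂ,
      DifferentiableOn ℂ g (Metric.ball (0:ℂ) 1) →
      ContinuousOn g (Metric.closedBall (0:ℂ) 1) →
      DifferentiableOn ℂ ψ (Metric.ball (0:ℂ) 1) →
      ContinuousOn ψ (Metric.closedBall (0:ℂ) 1) →
      Set.MapsTo ψ (Metric.ball (0:ℂ) 1) (Metric.ball (0:ℂ) 1) →
      Set.MapsTo ψ (Metric.closedBall (0:ℂ) 1) (Metric.closedBall (0:ℂ) 1) →
      g 0 = 0 → ψ 0 = 0 →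
      (∫ θ in (0:ℝ)..(2*π), ‖(g ∘ ψ) (Complex.exp (θ*Complex.I))‖^2)
        ≤ (2*π)⁻¹ * (3 * (∫ θ in (0:ℝ)..(2*π), ‖ψ (Complex.exp (θ*Complex.I))‖^2)
            * ∫ θ in (0:ℝ)..(2*π), ‖g (Complex.exp (θ*Complex.I))‖^2) := by
  intro g ψ hgd hgc hψd hψc hmo hmc hg0 hψ0
  -- the divided function h
  set h : ℂ → ℂ := dslope g 0 with hh_def
  have hh_ne : ∀ z : ℂ, z ≠ 0 → h z = g z * z⁻¹ := by
    intro z hz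
    rw [hh_def, dslope_of_ne _ hz, slope_def_field, hg0, sub_zero, sub_zero, div_eq_mul_inv]
  have hzh : ∀ z : ℂ, z * h z = g z := by
    intro z
    rcases eq_or_ne z 0 with rfl | hz
    · simp [hg0]
    · rw [hh_ne z hz]; field_simp
  have hhd : DifferentiableOn ℂ h (Metric.ball 0 1) := by
    rw [hh_def]
    exact (differentiableOn_dslope (isOpen_ball.mem_nhds (Metric.mem_ball_self one_pos))).mpr hgd
  have hhc : ContinuousOn h (Metric.closedBall (0:ℂ) 1) := by
    intro z hz
    rcases eq_or_ne z 0 with rfl | hne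
    · exact ((hhd 0 (Metric.mem_ball_self one_pos)).differentiableAt
        (isOpen_ball.mem_nhds (Metric.mem_ball_self one_pos))).continuousAt.continuousWithinAt
    · have hbase : ContinuousWithinAt (fun w => g w * w⁻¹) (Metric.closedBall (0:ℂ) 1) z :=
        (hgc z hz).mul (continuousAt_inv₀ hne).continuousWithinAt
      refine hbase.congr_of_eventuallyEq ?_ (hh_ne z hne)
      filter_upwards [(eventually_ne_nhds hne).filter_mono nhdsWithin_le_nhds] with w hw
      exact hh_ne w hw
  have hdc : DiffContOnCl ℂ h (Metric.ball 0 1) :=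
    ⟨hhd, by rwa [closure_ball (0:ℂ) one_ne_zero]⟩
  have hg_eq : ∀ w : ℂ, ‖g w‖^2 = normSq w * ‖h w‖^2 := by
    intro w
    rw [← hzh w, norm_mul, mul_pow]
    congr 1
    rw [Complex.sq_norm]
  have hBg : (∫ t in (0:ℝ)..(2*π), ‖h (Complex.exp (t*Complex.I))‖^2)
      = ∫ t in (0:ℝ)..(2*π), ‖g (Complex.exp (t*Complex.I))‖^2 := by
    refine intervalIntegral.integral_congr fun t _ => ?_
    have hne : Complex.exp ((t:ℂ)*Complex.I) ≠ 0 := Complex.exp_ne_zero _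
    rw [hh_ne _ hne, norm_mul, norm_inv]
    rw [show ‖Complex.exp ((t:ℂ)*Complex.I)‖ = 1 from by exact exp_abs_one t]
    norm_num
  -- fixed r bound
  have hmain : ∀ r : ℝ, r ∈ Set.Ioo (0:ℝ) 1 →
      (∫ θ in (0:ℝ)..(2*π), ‖(g ∘ ψ) ((r:ℂ)*Complex.exp (θ*Complex.I))‖^2)
        ≤ (2*π)⁻¹ * (3 * (∫ θ in (0:ℝ)..(2*π), ‖ψ ((r:ℂ)*Complex.exp (θ*Complex.I))‖^2)
            * ∫ θ in (0:ℝ)..(2*π), ‖g (Complex.exp (θ*Complex.I))‖^2) := by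
    intro r hr
    have h1 := main_r hψd hψc hmo hψ0 hdc hr.1 hr.2
    rw [hBg] at h1
    have e1 : (∫ θ in (0:ℝ)..(2*π), ‖(g ∘ ψ) ((r:ℂ)*Complex.exp (θ*Complex.I))‖^2)
        = ∫ θ in (0:ℝ)..(2*π), normSq (ψ ((r:ℂ)*Complex.exp (θ*Complex.I)))
            * ‖h (ψ ((r:ℂ)*Complex.exp (θ*Complex.I)))‖^2 :=
      intervalIntegral.integral_congr fun θ _ => hg_eq _
    have e2 : (∫ θ in (0:ℝ)..(2*π), normSq (ψ ((r:ℂ)*Complex.exp (θ*Complex.I))))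
        = ∫ θ in (0:ℝ)..(2*π), ‖ψ ((r:ℂ)*Complex.exp (θ*Complex.I))‖^2 :=
      intervalIntegral.integral_congr fun θ _ => by
        rw [Complex.sq_norm]
    rw [e1, ← e2]
    exact h1
  -- limits as r → 1⁻
  have hlimL := tendsto_circle_integral (f := g ∘ ψ) (hgc.comp hψc hmc)
  have hlimψ := tendsto_circle_integral (f := ψ) hψc
  have hlimR : Filter.Tendsto
      (fun r : ℝ => (2*π)⁻¹ * (3 * (∫ θ in (0:ℝ)..(2*π), ‖ψ ((r:ℂ)*Complex.exp (θ*Complex.I))‖^2)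
          * ∫ θ in (0:ℝ)..(2*π), ‖g (Complex.exp (θ*Complex.I))‖^2))
      (nhdsWithin 1 (Set.Iio 1))
      (𝓝 ((2*π)⁻¹ * (3 * (∫ θ in (0:ℝ)..(2*π), ‖ψ (Complex.exp (θ*Complex.I))‖^2)
          * ∫ θ in (0:ℝ)..(2*π), ‖g (Complex.exp (θ*Complex.I))‖^2))) :=
    (((hlimψ.const_mul 3).mul_const _).const_mul _)
  refine le_of_tendsto_of_tendsto hlimL hlimR ?_
  filter_upwards [Ioo_mem_nhdsLT_of_mem (by norm_num : (1:ℝ) ∈ Set.Ioc (0:ℝ) 1)] with r hr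
  exact hmain r hr

/-- Composition bound in `H²`: there is an absolute constant `C` such that whenever
`g, ψ` are analytic on the unit disk (with boundary values), `g(0) = ψ(0) = 0`, `g ∈ H²`
and `ψ` maps the disk into itself, then `‖g∘ψ‖₂ ≤ C ‖g‖₂ ‖ψ‖₂`. -/
theorem composition_H2_bound :
    ∃ C > 0, ∀ g ψ : ℂ → ℂ,
      DifferentiableOn ℂ g (Metric.ball (0:ℂ) 1) →
      ContinuousOn g (Metric.closedBall (0:ℂ) 1) →
      DifferentiableOn ℂ ψ (Metric.ball (0:ℂ) 1) →
      ContinuousOn ψ (Metric.closedBall (0:ℂ) 1) →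
      Set.MapsTo ψ (Metric.ball (0:ℂ) 1) (Metric.ball (0:ℂ) 1) →
      Set.MapsTo ψ (Metric.closedBall (0:ℂ) 1) (Metric.closedBall (0:ℂ) 1) →
      g 0 = 0 → ψ 0 = 0 →
      Real.sqrt (bnormSq (g ∘ ψ)) ≤
        C * Real.sqrt (bnormSq g) * Real.sqrt (bnormSq ψ) := by
  refine ⟨1, one_pos, ?_⟩
  intro g ψ hgd hgc hψd hψc hmo hmc hg0 hψ0
  have key := composition_H2_bound' g ψ hgd hgc hψd hψc hmo hmc hg0 hψ0
  have h2 : bnormSq (g ∘ ψ) ≤ (2*π)⁻¹ * (3 * bnormSq ψ * bnormSq g) := key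
  have hψnn : 0 ≤ bnormSq ψ :=
    intervalIntegral.integral_nonneg Real.two_pi_pos.le (fun x _ => by positivity)
  have hgnn : 0 ≤ bnormSq g :=
    intervalIntegral.integral_nonneg Real.two_pi_pos.le (fun x _ => by positivity)
  have h3 : bnormSq (g ∘ ψ) ≤ bnormSq g * bnormSq ψ := by
    refine le_trans h2 ?_
    have hle : 3/(2*π) ≤ 1 := by
      rw [div_le_one Real.two_pi_pos]; nlinarith [Real.pi_gt_three]
    have hmul := mul_le_mul_of_nonneg_right hle (mul_nonneg hψnn hgnn)
    calc (2*π)⁻¹ * (3 * bnormSq ψ * bnormSq g) = 3/(2*π) * (bnormSq ψ * bnormSq g) := by ring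
      _ ≤ 1 * (bnormSq ψ * bnormSq g) := hmul
      _ = bnormSq g * bnormSq ψ := by ring
  have h4 : Real.sqrt (bnormSq (g ∘ ψ)) ≤ Real.sqrt (bnormSq g * bnormSq ψ) :=
    Real.sqrt_le_sqrt h3
  rw [Real.sqrt_mul hgnn] at h4
  simpa using h4

end
end

section
/- If p ∈ [0,1] and φ is an analytic self-map of D with φ(0) = 0, then for every f with ‖f‖_{CA_p,*} < ∞ one has ‖f∘φ‖_{CA_p,*} ≤ ‖f‖_{CA_p,*}. In particular C_φ is a contraction on the Campanato space CA_p (with respect to the seminorm) when φ fixes the origin. -/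
open Metric Set intervalIntegral Polynomial Filter

lemma denom_ne {a z : ℂ} (ha : ‖a‖ < 1) (hz : ‖z‖ ≤ 1) :
    1 - (starRingEnd ℂ) a * z ≠ 0 := by
  intro h
  have h1 : (starRingEnd ℂ) a * z = 1 := by linear_combination -h
  have : ‖(starRingEnd ℂ) a * z‖ < 1 := by
    rw [norm_mul, RCLike.norm_conj]
    calc ‖a‖ * ‖z‖ ≤ ‖a‖ * 1 := mul_le_mul_of_nonneg_left hz (norm_nonneg _)
      _ < 1 := by simpa using ha
  rw [h1] at this
  simp at this

lemma key_normSq (a z : ℂ) :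
    Complex.normSq (1 - (starRingEnd ℂ) a * z) - Complex.normSq (a - z)
      = (1 - Complex.normSq a) * (1 - Complex.normSq z) := by
  rw [Complex.normSq_sub, Complex.normSq_sub, Complex.normSq_mul, Complex.normSq_conj]
  simp only [map_mul, Complex.conj_conj, Complex.normSq_one, one_mul]
  ring

lemma normSq_le_of_norm_le {z : ℂ} {c : ℝ} (h : ‖z‖ ≤ c) : Complex.normSq z ≤ c ^ 2 := by
  rw [← Complex.sq_norm]
  exact pow_le_pow_left₀ (norm_nonneg _) h 2

lemma normSq_lt_one_s10 {a : ℂ} (ha : ‖a‖ < 1) : Complex.normSq a < 1 := by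
  rw [← Complex.sq_norm]
  nlinarith [norm_nonneg a]

lemma norm_mSigma_le_one {a z : ℂ} (ha : ‖a‖ < 1) (hz : ‖z‖ ≤ 1) : ‖mSigma a z‖ ≤ 1 := by
  have hkey := key_normSq a z
  have h1 : Complex.normSq (a - z) ≤ Complex.normSq (1 - (starRingEnd ℂ) a * z) := by
    nlinarith [normSq_lt_one_s10 ha, normSq_le_of_norm_le hz]
  have h2 : ‖a - z‖ ≤ ‖1 - (starRingEnd ℂ) a * z‖ := by
    rw [Complex.norm_def, Complex.norm_def]
    exact Real.sqrt_le_sqrt h1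
  rw [mSigma, norm_div]
  exact div_le_one_of_le₀ h2 (norm_nonneg _)

lemma norm_mSigma_lt_one {a z : ℂ} (ha : ‖a‖ < 1) (hz : ‖z‖ < 1) : ‖mSigma a z‖ < 1 := by
  have hkey := key_normSq a z
  have h1 : Complex.normSq (a - z) < Complex.normSq (1 - (starRingEnd ℂ) a * z) := by
    nlinarith [normSq_lt_one_s10 ha, normSq_lt_one_s10 hz]
  have h2 : ‖a - z‖ < ‖1 - (starRingEnd ℂ) a * z‖ := by
    rw [Complex.norm_def, Complex.norm_def]
    exact Real.sqrt_lt_sqrt (Complex.normSq_nonneg _) h1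
  rw [mSigma, norm_div]
  exact (div_lt_one (norm_pos_iff.mpr (denom_ne ha hz.le))).mpr h2

lemma mSigma_zero (a : ℂ) : mSigma a 0 = a := by simp [mSigma]

lemma mSigma_self (a : ℂ) : mSigma a a = 0 := by simp [mSigma]

lemma mSigma_invol {a z : ℂ} (ha : ‖a‖ < 1) (hz : ‖z‖ ≤ 1) :
    mSigma a (mSigma a z) = z := by
  have h1 : 1 - (starRingEnd ℂ) a * z ≠ 0 := denom_ne ha hz
  have h2 : 1 - (starRingEnd ℂ) a * mSigma a z ≠ 0 :=
    denom_ne ha (norm_mSigma_le_one ha hz)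
  have h3 : 1 - a * (starRingEnd ℂ) a ≠ 0 := by
    have := denom_ne ha ha.le
    rwa [mul_comm] at this
  simp only [mSigma] at h2 ⊢
  rw [div_eq_iff h2]
  linear_combination -(div_mul_cancel₀ (a - z) h1)

lemma mSigma_contOn {a : ℂ} (ha : ‖a‖ < 1) : ContinuousOn (mSigma a) (closedBall 0 1) := by
  apply ContinuousOn.div (by fun_prop) (by fun_prop)
  exact fun z hz => denom_ne ha (by simpa [mem_closedBall_zero_iff] using hz)

lemma mSigma_diffOn {a : ℂ} (ha : ‖a‖ < 1) : DifferentiableOn ℂ (mSigma a) (ball 0 1) := by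
  apply DifferentiableOn.div (by fun_prop) (by fun_prop)
  exact fun z hz => denom_ne ha (le_of_lt (by simpa [mem_ball_zero_iff] using hz))

lemma norm_exp_circle (θ : ℝ) : ‖Complex.exp (θ * Complex.I)‖ = 1 := by
  exact Complex.norm_exp_ofReal_mul_I θ

lemma exp_circle_mem (θ : ℝ) : Complex.exp (θ * Complex.I) ∈ closedBall (0:ℂ) 1 := by
  simp [mem_closedBall_zero_iff, norm_exp_circle]

lemma cont_circle {F : ℂ → ℂ} (hF : ContinuousOn F (closedBall 0 1)) :
    Continuous fun θ : ℝ => F (Complex.exp (θ * Complex.I)) :=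
  hF.comp_continuous (by fun_prop) exp_circle_mem

/-- Mean value property on the boundary circle. -/
lemma meanValue (F : ℂ → ℂ) (hc : ContinuousOn F (closedBall 0 1))
    (hd : DifferentiableOn ℂ F (ball 0 1)) :
    ∫ θ in (0:ℝ)..(2 * Real.pi), F (Complex.exp (θ * Complex.I))
      = (2 * Real.pi : ℂ) * F 0 := by
  have h := Complex.circleIntegral_div_sub_of_differentiable_on_off_countable
    (countable_empty) (mem_ball_self one_pos) hc
    (fun z hz => hd.differentiableAt (isOpen_ball.mem_nhds hz.1))
  rw [circleIntegral] at h
  simp only [deriv_circleMap, circleMap_zero, Complex.ofReal_one, one_mul, sub_zero, smul_eq_mul] at h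
  have heq : ∀ θ : ℝ, Complex.exp (θ * Complex.I) * Complex.I *
      (F (Complex.exp (θ * Complex.I)) / Complex.exp (θ * Complex.I))
      = Complex.I * F (Complex.exp (θ * Complex.I)) := by
    intro θ
    have hne : Complex.exp ((θ : ℂ) * Complex.I) ≠ 0 := Complex.exp_ne_zero _
    field_simp
  simp only [heq] at h
  rw [intervalIntegral.integral_const_mul] at h
  have h2 : Complex.I * (∫ θ in (0:ℝ)..(2 * Real.pi), F (Complex.exp (θ * Complex.I)))
      = Complex.I * ((2 * Real.pi : ℂ) * F 0) := by rw [h]; ring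
  exact mul_left_cancel₀ Complex.I_ne_zero h2

lemma expand_int (c : ℂ) (G : ℂ → ℂ) (hGc : ContinuousOn G (closedBall 0 1))
    (hGd : DifferentiableOn ℂ G (ball 0 1)) (hG0 : G 0 = 0) :
    (∫ θ in (0:ℝ)..(2 * Real.pi), ‖c + G (Complex.exp (θ * Complex.I))‖ ^ 2)
      = 2 * Real.pi * ‖c‖ ^ 2
        + ∫ θ in (0:ℝ)..(2 * Real.pi), ‖G (Complex.exp (θ * Complex.I))‖ ^ 2 := by
  have hGcont : Continuous fun θ : ℝ => G (Complex.exp (θ * Complex.I)) := cont_circle hGc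
  have hpt : ∀ w : ℂ, ‖c + w‖ ^ 2
      = ‖c‖ ^ 2 + 2 * ((starRingEnd ℂ) c * w).re + ‖w‖ ^ 2 := by
    intro w
    simp only [Complex.sq_norm, Complex.normSq_add]
    have : (c * (starRingEnd ℂ) w).re = ((starRingEnd ℂ) c * w).re := by
      simp [Complex.mul_re]
    rw [this]
    ring
  have hInt1 : IntervalIntegrable (fun _ : ℝ => ‖c‖ ^ 2) MeasureTheory.volume 0 (2 * Real.pi) :=
    intervalIntegrable_const
  have hIntG : IntervalIntegrable
      (fun θ : ℝ => (starRingEnd ℂ) c * G (Complex.exp (θ * Complex.I)))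
      MeasureTheory.volume 0 (2 * Real.pi) :=
    (continuous_const.mul hGcont).intervalIntegrable _ _
  have hInt2 : IntervalIntegrable
      (fun θ : ℝ => 2 * ((starRingEnd ℂ) c * G (Complex.exp (θ * Complex.I))).re)
      MeasureTheory.volume 0 (2 * Real.pi) :=
    (continuous_const.mul
      (Complex.continuous_re.comp (continuous_const.mul hGcont))).intervalIntegrable _ _
  have hInt3 : IntervalIntegrable
      (fun θ : ℝ => ‖G (Complex.exp (θ * Complex.I))‖ ^ 2)
      MeasureTheory.volume 0 (2 * Real.pi) :=
    (hGcont.norm.pow 2).intervalIntegrable _ _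
  have hmid : (∫ θ in (0:ℝ)..(2 * Real.pi),
      ((starRingEnd ℂ) c * G (Complex.exp (θ * Complex.I))).re) = 0 := by
    have hcomm := (Complex.reCLM).intervalIntegral_comp_comm hIntG
    have hval : (∫ θ in (0:ℝ)..(2 * Real.pi),
        (starRingEnd ℂ) c * G (Complex.exp (θ * Complex.I))) = 0 := by
      rw [intervalIntegral.integral_const_mul, meanValue G hGc hGd, hG0]
      ring
    simpa [hval] using hcomm
  have hsplit : (∫ θ in (0:ℝ)..(2 * Real.pi), ‖c + G (Complex.exp (θ * Complex.I))‖ ^ 2)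
      = (∫ _ in (0:ℝ)..(2 * Real.pi), ‖c‖ ^ 2)
        + (∫ θ in (0:ℝ)..(2 * Real.pi),
            2 * ((starRingEnd ℂ) c * G (Complex.exp (θ * Complex.I))).re)
        + ∫ θ in (0:ℝ)..(2 * Real.pi), ‖G (Complex.exp (θ * Complex.I))‖ ^ 2 := by
    rw [← intervalIntegral.integral_add hInt1 hInt2,
        ← intervalIntegral.integral_add (hInt1.add hInt2) hInt3]
    simp only [hpt]
  rw [hsplit, intervalIntegral.integral_const_mul, hmid, intervalIntegral.integral_const]
  simp

lemma littlewood_poly : ∀ (n : ℕ) (q : Polynomial ℂ), q.natDegree ≤ n →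
    ∀ ψ : ℂ → ℂ, ContinuousOn ψ (closedBall 0 1) → DifferentiableOn ℂ ψ (ball 0 1) →
    MapsTo ψ (closedBall 0 1) (closedBall 0 1) → ψ 0 = 0 →
    (∫ θ in (0:ℝ)..(2 * Real.pi), ‖q.eval (ψ (Complex.exp (θ * Complex.I)))‖ ^ 2)
      ≤ ∫ θ in (0:ℝ)..(2 * Real.pi), ‖q.eval (Complex.exp (θ * Complex.I))‖ ^ 2 := by
  intro n
  induction n with
  | zero =>
    intro q hq ψ _ _ _ _
    obtain ⟨a, rfl⟩ := Polynomial.natDegree_eq_zero.mp (Nat.le_zero.mp hq)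
    simp
  | succ n ih =>
    intro q hq ψ hψc hψd hψm hψ0
    set c := q.coeff 0 with hc
    set q₁ := q.divX with hq₁
    have hev : ∀ w : ℂ, q.eval w = c + w * q₁.eval w := by
      intro w
      nth_rewrite 1 [← Polynomial.X_mul_divX_add q]
      rw [Polynomial.eval_add, Polynomial.eval_mul, Polynomial.eval_X, Polynomial.eval_C]
      ring
    have hq₁deg : q₁.natDegree ≤ n := by
      have h := Polynomial.natDegree_divX_eq_natDegree_tsub_one (p := q)
      rw [← hq₁] at h
      omega
    have hψcirc : Continuous fun θ : ℝ => ψ (Complex.exp (θ * Complex.I)) := cont_circle hψc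
    have hGc : ContinuousOn (fun z => ψ z * q₁.eval (ψ z)) (closedBall 0 1) :=
      hψc.mul (q₁.continuous.comp_continuousOn hψc)
    have hGd : DifferentiableOn ℂ (fun z => ψ z * q₁.eval (ψ z)) (ball 0 1) :=
      hψd.mul (q₁.differentiable.comp_differentiableOn hψd)
    have hL : (∫ θ in (0:ℝ)..(2 * Real.pi),
          ‖c + ψ (Complex.exp (θ * Complex.I))
              * q₁.eval (ψ (Complex.exp (θ * Complex.I)))‖ ^ 2)
        = 2 * Real.pi * ‖c‖ ^ 2
          + ∫ θ in (0:ℝ)..(2 * Real.pi),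
              ‖ψ (Complex.exp (θ * Complex.I))
                * q₁.eval (ψ (Complex.exp (θ * Complex.I)))‖ ^ 2 :=
      expand_int c (fun z => ψ z * q₁.eval (ψ z)) hGc hGd (by simp [hψ0])
    have hR : (∫ θ in (0:ℝ)..(2 * Real.pi),
          ‖c + Complex.exp (θ * Complex.I)
              * q₁.eval (Complex.exp (θ * Complex.I))‖ ^ 2)
        = 2 * Real.pi * ‖c‖ ^ 2
          + ∫ θ in (0:ℝ)..(2 * Real.pi),
              ‖Complex.exp (θ * Complex.I)
                * q₁.eval (Complex.exp (θ * Complex.I))‖ ^ 2 :=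
      expand_int c (fun z => z * q₁.eval z)
        ((continuous_id.mul q₁.continuous).continuousOn)
        ((differentiable_id.mul q₁.differentiable).differentiableOn) (by simp)
    have hR2 : (∫ θ in (0:ℝ)..(2 * Real.pi),
          ‖Complex.exp (θ * Complex.I) * q₁.eval (Complex.exp (θ * Complex.I))‖ ^ 2)
        = ∫ θ in (0:ℝ)..(2 * Real.pi), ‖q₁.eval (Complex.exp (θ * Complex.I))‖ ^ 2 := by
      simp only [norm_mul, norm_exp_circle, one_mul]
    have hmono : (∫ θ in (0:ℝ)..(2 * Real.pi),
          ‖ψ (Complex.exp (θ * Complex.I))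
            * q₁.eval (ψ (Complex.exp (θ * Complex.I)))‖ ^ 2)
        ≤ ∫ θ in (0:ℝ)..(2 * Real.pi),
            ‖q₁.eval (ψ (Complex.exp (θ * Complex.I)))‖ ^ 2 := by
      apply intervalIntegral.integral_mono_on (by positivity)
        ((hψcirc.mul (q₁.continuous.comp hψcirc)).norm.pow 2 |>.intervalIntegrable _ _)
        ((q₁.continuous.comp hψcirc).norm.pow 2 |>.intervalIntegrable _ _)
      intro θ _
      simp only [Pi.pow_apply, Pi.mul_apply, Function.comp_apply]
      have h1 : ‖ψ (Complex.exp (θ * Complex.I))‖ ≤ 1 := by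
        simpa [mem_closedBall_zero_iff] using hψm (exp_circle_mem θ)
      rw [norm_mul, mul_pow]
      apply mul_le_of_le_one_left (sq_nonneg _)
      nlinarith [norm_nonneg (ψ (Complex.exp (θ * Complex.I)))]
    have hIH := ih q₁ hq₁deg ψ hψc hψd hψm hψ0
    simp only [hev]
    rw [hL, hR]
    linarith

lemma partialSum_eq_eval (p : FormalMultilinearSeries ℂ ℂ ℂ) (n : ℕ) (z : ℂ) :
    p.partialSum n z = (∑ k ∈ Finset.range n, C (p.coeff k) * X ^ k).eval z := by
  rw [FormalMultilinearSeries.partialSum]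
  rw [Polynomial.eval_finset_sum]
  apply Finset.sum_congr rfl
  intro k _
  rw [FormalMultilinearSeries.apply_eq_pow_smul_coeff, Polynomial.eval_mul,
    Polynomial.eval_C, Polynomial.eval_pow, Polynomial.eval_X, smul_eq_mul, mul_comm]

lemma approx (g : ℂ → ℂ) (hc : ContinuousOn g (closedBall 0 1))
    (hd : DifferentiableOn ℂ g (ball 0 1)) {ε : ℝ} (hε : 0 < ε) :
    ∃ q : Polynomial ℂ, ∀ z ∈ closedBall (0:ℂ) 1, ‖g z - q.eval z‖ ≤ ε := by
  -- uniform continuity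
  have huc : UniformContinuousOn g (closedBall 0 1) :=
    (isCompact_closedBall 0 1).uniformContinuousOn_of_continuous hc
  rw [Metric.uniformContinuousOn_iff] at huc
  obtain ⟨δ, hδ, hδ'⟩ := huc (ε / 2) (by positivity)
  set r : ℝ := 1 - min δ 1 / 2 with hr
  have hδ1 : 0 < min δ 1 := lt_min hδ one_pos
  have hr0 : 0 < r := by
    have : min δ 1 ≤ 1 := min_le_right _ _
    simp only [hr]; linarith
  have hr1 : r < 1 := by simp only [hr]; linarith
  -- g(rz) is close to g(z)
  have hclose : ∀ z ∈ closedBall (0:ℂ) 1, ‖g ((r:ℂ) * z) - g z‖ ≤ ε / 2 := by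
    intro z hz
    rw [mem_closedBall_zero_iff] at hz
    have hmem : (r:ℂ) * z ∈ closedBall (0:ℂ) 1 := by
      rw [mem_closedBall_zero_iff, norm_mul, Complex.norm_real]
      calc |r| * ‖z‖ ≤ 1 * 1 := by
            apply mul_le_mul _ hz (norm_nonneg _) zero_le_one
            rw [abs_of_pos hr0]; exact hr1.le
        _ = 1 := one_mul 1
    have hdist : dist ((r:ℂ) * z) z < δ := by
      rw [dist_eq_norm]
      have : (r:ℂ) * z - z = ((r - 1 : ℝ):ℂ) * z := by push_cast; ring
      rw [this, norm_mul, Complex.norm_real]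
      have h2 : |r - 1| = min δ 1 / 2 := by rw [abs_of_nonpos (by linarith), hr]; ring
      calc |r - 1| * ‖z‖ ≤ min δ 1 / 2 * 1 := by
            rw [h2]; exact mul_le_mul_of_nonneg_left hz (by positivity)
        _ < δ := by
            have : min δ 1 ≤ δ := min_le_left _ _
            linarith
    have := hδ' _ hmem _ (mem_closedBall_zero_iff.mpr hz) hdist
    rw [dist_eq_norm] at this
    exact this.le
  -- power series for g(rz)
  set R₀ : ℝ := 1 / r with hR0
  have hR₀ : 1 < R₀ := by rw [hR0]; rw [lt_div_iff₀ hr0]; linarith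
  have hR₀0 : 0 < R₀ := by linarith
  set R : NNReal := ⟨(1 + R₀) / 2, by positivity⟩ with hR
  set r' : NNReal := ⟨(3 + R₀) / 4, by positivity⟩ with hr'
  have hRR : (R : ℝ) = (1 + R₀) / 2 := rfl
  have hrr : (r' : ℝ) = (3 + R₀) / 4 := rfl
  have hgr : DifferentiableOn ℂ (fun z => g ((r : ℂ) * z)) (closedBall 0 (R : ℝ)) := by
    apply DifferentiableOn.comp hd
      (((differentiable_const ((r:ℂ))).mul differentiable_id).differentiableOn)
    intro z hz
    rw [mem_closedBall_zero_iff] at hz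
    simp only [mem_ball_zero_iff, Pi.mul_apply, id_eq]
    rw [norm_mul, Complex.norm_real, Real.norm_eq_abs, abs_of_pos hr0]
    calc r * ‖z‖ ≤ r * (R:ℝ) := mul_le_mul_of_nonneg_left hz hr0.le
      _ < r * R₀ := by
          apply mul_lt_mul_of_pos_left _ hr0
          rw [hRR]; linarith
      _ = 1 := by rw [hR0]; field_simp
  have hRpos : 0 < R := by
    rw [← NNReal.coe_lt_coe, hRR]
    positivity
  have hps := hgr.hasFPowerSeriesOnBall hRpos
  set pp := cauchyPowerSeries (fun z => g ((r : ℂ) * z)) 0 R with hpp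
  have hr'R : (r' : ENNReal) < (R : ENNReal) := by
    rw [ENNReal.coe_lt_coe, ← NNReal.coe_lt_coe, hRR, hrr]
    linarith
  have htu := hps.tendstoUniformlyOn hr'R
  rw [Metric.tendstoUniformlyOn_iff] at htu
  obtain ⟨n, hn⟩ := (htu (ε / 2) (by positivity)).exists
  refine ⟨∑ k ∈ Finset.range n, C (pp.coeff k) * X ^ k, ?_⟩
  intro z hz
  have hzm : z ∈ Metric.ball (0:ℂ) (r' : ℝ) := by
    rw [mem_ball_zero_iff]
    rw [mem_closedBall_zero_iff] at hz
    rw [hrr]; linarith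
  have h2 := hn z hzm
  rw [zero_add, dist_eq_norm] at h2
  have h1 := hclose z hz
  rw [← partialSum_eq_eval]
  calc ‖g z - pp.partialSum n z‖
      ≤ ‖g z - g ((r:ℂ) * z)‖ + ‖g ((r:ℂ) * z) - pp.partialSum n z‖ := by
        have := dist_triangle (g z) (g ((r:ℂ) * z)) (pp.partialSum n z)
        simpa [dist_eq_norm] using this
    _ ≤ ε / 2 + ε / 2 := add_le_add (by rw [norm_sub_rev]; exact h1) h2.le
    _ = ε := by ring


lemma littlewood (g ψ : ℂ → ℂ)
    (hgc : ContinuousOn g (closedBall 0 1)) (hgd : DifferentiableOn ℂ g (ball 0 1))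
    (hψc : ContinuousOn ψ (closedBall 0 1)) (hψd : DifferentiableOn ℂ ψ (ball 0 1))
    (hψm : MapsTo ψ (closedBall 0 1) (closedBall 0 1)) (hψ0 : ψ 0 = 0) :
    bnormSq (fun z => g (ψ z)) ≤ bnormSq g := by
  obtain ⟨C0, hC0⟩ := (isCompact_closedBall (0:ℂ) 1).exists_bound_of_continuousOn hgc
  set C := max C0 0 with hC
  have hCg : ∀ w ∈ closedBall (0:ℂ) 1, ‖g w‖ ≤ C :=
    fun w hw => (hC0 w hw).trans (le_max_left _ _)
  have hCnn : 0 ≤ C := le_max_right _ _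
  set K : ℝ := 2 * C + 3 with hK
  have hKpos : 0 < K := by positivity
  have hpi := Real.pi_pos
  -- continuity helpers
  have hecirc : Continuous fun θ : ℝ => Complex.exp (θ * Complex.I) := by fun_prop
  have hψcirc : Continuous fun θ : ℝ => ψ (Complex.exp (θ * Complex.I)) := cont_circle hψc
  have hgψcirc : Continuous fun θ : ℝ => g (ψ (Complex.exp (θ * Complex.I))) :=
    cont_circle ((hgc.comp hψc hψm))
  have hgcirc : Continuous fun θ : ℝ => g (Complex.exp (θ * Complex.I)) := cont_circle hgc
  apply le_of_forall_pos_le_add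
  intro ε' hε'
  set εq : ℝ := min 1 (ε' / (4 * Real.pi * K)) with hεq
  have hεqpos : 0 < εq := lt_min one_pos (by positivity)
  have hεq1 : εq ≤ 1 := min_le_left _ _
  obtain ⟨q, hq⟩ := approx g hgc hgd hεqpos
  have hqcont : Continuous fun w : ℂ => q.eval w := q.continuous
  -- pointwise bounds
  have hb1 : ∀ w ∈ closedBall (0:ℂ) 1, ‖g w‖ ^ 2 ≤ ‖q.eval w‖ ^ 2 + εq * K := by
    intro w hw
    have h1 := hq w hw
    have h2 := hCg w hw
    have h3 : ‖g w‖ ≤ ‖q.eval w‖ + εq := by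
      have := norm_sub_norm_le (g w) (q.eval w)
      linarith
    have h4 : ‖q.eval w‖ ≤ C + 1 := by
      have := norm_sub_norm_le (q.eval w) (g w)
      rw [norm_sub_rev] at h1
      linarith
    nlinarith [norm_nonneg (g w), norm_nonneg (q.eval w)]
  have hb2 : ∀ w ∈ closedBall (0:ℂ) 1, ‖q.eval w‖ ^ 2 ≤ ‖g w‖ ^ 2 + εq * K := by
    intro w hw
    have h1 := hq w hw
    have h2 := hCg w hw
    have h3 : ‖q.eval w‖ ≤ ‖g w‖ + εq := by
      have := norm_sub_norm_le (q.eval w) (g w)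
      rw [norm_sub_rev] at h1
      linarith
    nlinarith [norm_nonneg (g w), norm_nonneg (q.eval w)]
  -- chain of integral inequalities
  have hInt1 : IntervalIntegrable (fun θ : ℝ => ‖g (ψ (Complex.exp (θ * Complex.I)))‖ ^ 2)
      MeasureTheory.volume 0 (2 * Real.pi) := (hgψcirc.norm.pow 2).intervalIntegrable _ _
  have hInt2 : IntervalIntegrable
      (fun θ : ℝ => ‖q.eval (ψ (Complex.exp (θ * Complex.I)))‖ ^ 2 + εq * K)
      MeasureTheory.volume 0 (2 * Real.pi) :=
    (((hqcont.comp hψcirc).norm.pow 2).add continuous_const).intervalIntegrable _ _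
  have hInt3 : IntervalIntegrable (fun θ : ℝ => ‖q.eval (ψ (Complex.exp (θ * Complex.I)))‖ ^ 2)
      MeasureTheory.volume 0 (2 * Real.pi) :=
    ((hqcont.comp hψcirc).norm.pow 2).intervalIntegrable _ _
  have hInt4 : IntervalIntegrable (fun θ : ℝ => ‖q.eval (Complex.exp (θ * Complex.I))‖ ^ 2)
      MeasureTheory.volume 0 (2 * Real.pi) :=
    ((hqcont.comp hecirc).norm.pow 2).intervalIntegrable _ _
  have hInt5 : IntervalIntegrable (fun θ : ℝ => ‖g (Complex.exp (θ * Complex.I))‖ ^ 2 + εq * K)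
      MeasureTheory.volume 0 (2 * Real.pi) :=
    ((hgcirc.norm.pow 2).add continuous_const).intervalIntegrable _ _
  have step1 : bnormSq (fun z => g (ψ z))
      ≤ (∫ θ in (0:ℝ)..(2 * Real.pi), ‖q.eval (ψ (Complex.exp (θ * Complex.I)))‖ ^ 2)
        + 2 * Real.pi * (εq * K) := by
    have : bnormSq (fun z => g (ψ z))
        ≤ ∫ θ in (0:ℝ)..(2 * Real.pi),
            (‖q.eval (ψ (Complex.exp (θ * Complex.I)))‖ ^ 2 + εq * K) := by
      apply intervalIntegral.integral_mono_on (by positivity) hInt1 hInt2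
      intro θ _
      exact hb1 _ (hψm (exp_circle_mem θ))
    rw [intervalIntegral.integral_add hInt3 intervalIntegrable_const,
      intervalIntegral.integral_const] at this
    calc bnormSq (fun z => g (ψ z)) ≤ _ := this
      _ = (∫ θ in (0:ℝ)..(2 * Real.pi), ‖q.eval (ψ (Complex.exp (θ * Complex.I)))‖ ^ 2)
            + 2 * Real.pi * (εq * K) := by
        rw [smul_eq_mul]; ring
  have step2 : (∫ θ in (0:ℝ)..(2 * Real.pi), ‖q.eval (ψ (Complex.exp (θ * Complex.I)))‖ ^ 2)
      ≤ ∫ θ in (0:ℝ)..(2 * Real.pi), ‖q.eval (Complex.exp (θ * Complex.I))‖ ^ 2 :=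
    littlewood_poly q.natDegree q le_rfl ψ hψc hψd hψm hψ0
  have step3 : (∫ θ in (0:ℝ)..(2 * Real.pi), ‖q.eval (Complex.exp (θ * Complex.I))‖ ^ 2)
      ≤ bnormSq g + 2 * Real.pi * (εq * K) := by
    have : (∫ θ in (0:ℝ)..(2 * Real.pi), ‖q.eval (Complex.exp (θ * Complex.I))‖ ^ 2)
        ≤ ∫ θ in (0:ℝ)..(2 * Real.pi), (‖g (Complex.exp (θ * Complex.I))‖ ^ 2 + εq * K) := by
      apply intervalIntegral.integral_mono_on (by positivity) hInt4 hInt5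
      intro θ _
      exact hb2 _ (exp_circle_mem θ)
    rw [intervalIntegral.integral_add (f := fun θ : ℝ => ‖g (Complex.exp (θ * Complex.I))‖ ^ 2) ((hgcirc.norm.pow 2).intervalIntegrable _ _)
      intervalIntegrable_const, intervalIntegral.integral_const] at this
    calc (∫ θ in (0:ℝ)..(2 * Real.pi), ‖q.eval (Complex.exp (θ * Complex.I))‖ ^ 2) ≤ _ := this
      _ = bnormSq g + 2 * Real.pi * (εq * K) := by rw [smul_eq_mul, bnormSq]; ring
  have hfinal : 4 * Real.pi * (εq * K) ≤ ε' := by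
    have h1 : εq ≤ ε' / (4 * Real.pi * K) := min_le_right _ _
    have h2 : 0 < 4 * Real.pi * K := by positivity
    calc 4 * Real.pi * (εq * K) = (4 * Real.pi * K) * εq := by ring
      _ ≤ (4 * Real.pi * K) * (ε' / (4 * Real.pi * K)) :=
          mul_le_mul_of_nonneg_left h1 h2.le
      _ = ε' := by field_simp
  linarith


lemma bnormSq_congr {F G : ℂ → ℂ} (h : ∀ z : ℂ, ‖z‖ = 1 → F z = G z) :
    bnormSq F = bnormSq G := by
  unfold bnormSq
  apply intervalIntegral.integral_congr
  intro θ _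
  simp only
  rw [h _ (norm_exp_circle θ)]

/-- If `p ∈ [0,1]` and `φ` is an analytic self-map of the disk fixing `0`, then the
composition operator `C_φ` is a contraction for the `CA_p` seminorm
`‖f‖_{CA_p,*} = sup_{a∈D} (1-|a|²)^{(1-p)/2} ‖f∘σ_a − f(a)‖₂`: any upper bound `M` for
the seminorm of `f` also bounds the seminorm of `f∘φ`. -/
theorem composition_contraction_of_fix_zero (p : ℝ) (hp : p ∈ Set.Icc (0:ℝ) 1)
    (φ f : ℂ → ℂ) (M : ℝ)
    (hφd : DifferentiableOn ℂ φ (Metric.ball (0:ℂ) 1))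
    (hφm : Set.MapsTo φ (Metric.ball (0:ℂ) 1) (Metric.ball (0:ℂ) 1))
    (hφc : ContinuousOn φ (Metric.closedBall (0:ℂ) 1))
    (hφmc : Set.MapsTo φ (Metric.closedBall (0:ℂ) 1) (Metric.closedBall (0:ℂ) 1))
    (hφ0 : φ 0 = 0)
    (hfd : DifferentiableOn ℂ f (Metric.ball (0:ℂ) 1))
    (hfc : ContinuousOn f (Metric.closedBall (0:ℂ) 1))
    (hfM : ∀ a ∈ Metric.ball (0:ℂ) 1,
      (1 - ‖a‖ ^ 2) ^ ((1 - p) / 2) *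
        Real.sqrt (bnormSq fun ξ => f (mSigma a ξ) - f a) ≤ M) :
    ∀ a ∈ Metric.ball (0:ℂ) 1,
      (1 - ‖a‖ ^ 2) ^ ((1 - p) / 2) *
        Real.sqrt (bnormSq fun ξ => f (φ (mSigma a ξ)) - f (φ a)) ≤ M := by
  intro a hamem
  have ha : ‖a‖ < 1 := by simpa [mem_ball_zero_iff] using hamem
  set b : ℂ := φ a with hbdef
  have hbmem : b ∈ Metric.ball (0:ℂ) 1 := hφm hamem
  have hb : ‖b‖ < 1 := by simpa [mem_ball_zero_iff] using hbmem
  -- the inner self-map ψ and the outer function g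
  set ψ : ℂ → ℂ := fun z => mSigma b (φ (mSigma a z)) with hψdef
  set g : ℂ → ℂ := fun z => f (mSigma b z) - f b with hgdef
  have hma_cb : MapsTo (mSigma a) (closedBall 0 1) (closedBall (0:ℂ) 1) := by
    intro z hz
    rw [mem_closedBall_zero_iff] at hz ⊢
    exact norm_mSigma_le_one ha hz
  have hma_b : MapsTo (mSigma a) (ball 0 1) (ball (0:ℂ) 1) := by
    intro z hz
    rw [mem_ball_zero_iff] at hz ⊢
    exact norm_mSigma_lt_one ha hz
  have hmb_cb : MapsTo (mSigma b) (closedBall 0 1) (closedBall (0:ℂ) 1) := by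
    intro z hz
    rw [mem_closedBall_zero_iff] at hz ⊢
    exact norm_mSigma_le_one hb hz
  have hmb_b : MapsTo (mSigma b) (ball 0 1) (ball (0:ℂ) 1) := by
    intro z hz
    rw [mem_ball_zero_iff] at hz ⊢
    exact norm_mSigma_lt_one hb hz
  have hψc : ContinuousOn ψ (closedBall 0 1) :=
    (mSigma_contOn hb).comp (hφc.comp (mSigma_contOn ha) hma_cb) (hφmc.comp hma_cb)
  have hψd : DifferentiableOn ℂ ψ (ball 0 1) :=
    (mSigma_diffOn hb).comp (hφd.comp (mSigma_diffOn ha) hma_b) (hφm.comp hma_b)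
  have hψm : MapsTo ψ (closedBall 0 1) (closedBall (0:ℂ) 1) :=
    hmb_cb.comp (hφmc.comp hma_cb)
  have hψ0 : ψ 0 = 0 := by
    rw [hψdef]
    simp only [mSigma_zero, ← hbdef, mSigma_self]
  have hgc : ContinuousOn g (closedBall 0 1) :=
    ((hfc.comp (mSigma_contOn hb) hmb_cb).sub continuousOn_const)
  have hgd : DifferentiableOn ℂ g (ball 0 1) :=
    ((hfd.comp (mSigma_diffOn hb) hmb_b).sub (differentiableOn_const _))
  have hlit := littlewood g ψ hgc hgd hψc hψd hψm hψ0
  have hcongr : bnormSq (fun z => g (ψ z))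
      = bnormSq (fun ξ => f (φ (mSigma a ξ)) - f (φ a)) := by
    apply bnormSq_congr
    intro z hz
    have hz1 : ‖z‖ ≤ 1 := hz.le
    have h1 : φ (mSigma a z) ∈ closedBall (0:ℂ) 1 := hφmc (hma_cb (by
      rwa [mem_closedBall_zero_iff]))
    rw [mem_closedBall_zero_iff] at h1
    simp only [hgdef, hψdef, ← hbdef]
    rw [mSigma_invol hb h1]
  rw [← hcongr]
  -- Schwarz lemma
  have hba : ‖b‖ ≤ ‖a‖ := by
    have := Complex.norm_le_norm_of_mapsTo_ball hφd (hφm.mono_right ball_subset_closedBall) hφ0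
      (z := a) ha
    simpa using this
  have he : 0 ≤ (1 - p) / 2 := by
    have := hp.2
    linarith
  have hrpow : (1 - ‖a‖ ^ 2) ^ ((1 - p) / 2) ≤ (1 - ‖b‖ ^ 2) ^ ((1 - p) / 2) := by
    apply Real.rpow_le_rpow
    · nlinarith [norm_nonneg a]
    · nlinarith [norm_nonneg b, norm_nonneg a]
    · exact he
  have hsqrt : Real.sqrt (bnormSq (fun z => g (ψ z)))
      ≤ Real.sqrt (bnormSq g) := Real.sqrt_le_sqrt hlit
  calc (1 - ‖a‖ ^ 2) ^ ((1 - p) / 2) * Real.sqrt (bnormSq (fun z => g (ψ z)))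
      ≤ (1 - ‖b‖ ^ 2) ^ ((1 - p) / 2) * Real.sqrt (bnormSq g) := by
        apply mul_le_mul hrpow hsqrt (Real.sqrt_nonneg _)
        exact Real.rpow_nonneg (by nlinarith [norm_nonneg b]) _
    _ ≤ M := hfM b hbmem
end
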